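/- arXiv:2203.08976 — 5 statements merged into one kernel-verified Lean document; each statement's English description precedes it below -/
import Mathlib

section
/- (Groenewegen's bound.) Let E be a finite-dimensional real inner product space of dimension r ≥ 1 and L ⊆ E a ℤ-lattice, and let λ₁ = λ₁(L) denote the first minimum of L, i.e. the minimum of ‖v‖ over nonzero v ∈ L. Then h⁰_θ(L) ≤ C(r, λ₁), where C(r, λ) = 3^r · (π λ²)^{−r/2} · ∫_{πλ²}^{+∞} u^{r/2} e^{−u} du. -/
open Real MeasureTheory

open Metric Set Filter
open scoped ENNReal NNReal Topology

section GroenewegenAux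

lemma groen_packing_card_le {E : Type*} [NormedAddCommGroup E] [NormedSpace ℝ E]
    [FiniteDimensional ℝ E] [MeasurableSpace E] [BorelSpace E] [Nontrivial E]
    {lam t : ℝ} (hlam : 0 < lam) (hts : lam ≤ t)
    (F : Finset E) (hsep : ∀ v ∈ F, ∀ w ∈ F, v ≠ w → lam ≤ ‖v - w‖)
    (hball : ∀ v ∈ F, ‖v‖ ≤ t) :
    (F.card : ℝ) ≤ (3 * t / lam) ^ Module.finrank ℝ E := by

  set r := Module.finrank ℝ E with hr
  set μ := (Module.finBasis ℝ E).addHaar with hμ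
  have hproper : ProperSpace E := FiniteDimensional.proper ℝ E
  set c := μ (ball (0:E) 1) with hc
  have hc0 : c ≠ 0 := (measure_ball_pos μ _ one_pos).ne'
  have hctop : c ≠ ⊤ := measure_ball_lt_top.ne
  have hdisj : (F : Set E).PairwiseDisjoint (fun v => ball v (lam / 2)) := by
    intro v hv w hw hvw
    exact ball_disjoint_ball (by rw [dist_eq_norm]; linarith [hsep v hv w hw hvw])
  have hunion : (⋃ v ∈ F, ball v (lam / 2)) ⊆ ball (0:E) (t + lam / 2) := by
    intro x hx
    simp only [mem_iUnion, mem_ball] at hx ⊢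
    obtain ⟨v, hv, hxv⟩ := hx
    have := hball v hv
    have h1 : dist x v = ‖x - v‖ := dist_eq_norm _ _
    have h2 : dist v 0 = ‖v‖ := by simp [dist_eq_norm]
    have h3 : dist x 0 ≤ dist x v + dist v 0 := dist_triangle _ _ _
    rw [dist_eq_norm] at hxv
    linarith
  have hmeas : μ (⋃ v ∈ F, ball v (lam / 2)) = ∑ v ∈ F, μ (ball v (lam / 2)) :=
    measure_biUnion_finset hdisj (fun v _ => measurableSet_ball)
  have hball2 : ∀ v : E, μ (ball v (lam / 2)) = ENNReal.ofReal ((lam / 2) ^ r) * c := by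
    intro v
    rw [hc, Measure.addHaar_ball μ v (by linarith : (0:ℝ) ≤ lam / 2)]
  have hbig : μ (ball (0:E) (t + lam / 2)) = ENNReal.ofReal ((t + lam / 2) ^ r) * c :=
    Measure.addHaar_ball μ _ (by linarith)
  have key : (F.card : ℝ≥0∞) * (ENNReal.ofReal ((lam / 2) ^ r) * c)
      ≤ ENNReal.ofReal ((t + lam / 2) ^ r) * c := by
    rw [← hbig]
    calc (F.card : ℝ≥0∞) * (ENNReal.ofReal ((lam / 2) ^ r) * c)
        = ∑ v ∈ F, μ (ball v (lam / 2)) := by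
          simp [hball2, Finset.sum_const, nsmul_eq_mul]
      _ = μ (⋃ v ∈ F, ball v (lam / 2)) := hmeas.symm
      _ ≤ μ (ball (0:E) (t + lam / 2)) := measure_mono hunion
  rw [← mul_assoc, ENNReal.mul_le_mul_iff_left hc0 hctop] at key
  have ht0 : (0:ℝ) < t := hlam.trans_le hts
  have h2 : (0:ℝ) < (lam / 2) ^ r := by positivity
  have key2 : (F.card : ℝ) * (lam / 2) ^ r ≤ (t + lam / 2) ^ r := by
    have := key
    rw [show ((F.card : ℝ≥0∞)) = ENNReal.ofReal (F.card : ℝ) by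
        simp [ENNReal.ofReal_natCast],
      ← ENNReal.ofReal_mul (by positivity)] at this
    exact (ENNReal.ofReal_le_ofReal_iff (pow_nonneg (by linarith) _)).mp this
  have key3 : (F.card : ℝ) ≤ ((t + lam / 2) / (lam / 2)) ^ r := by
    rw [div_pow, le_div_iff₀ h2]
    exact key2
  refine key3.trans (pow_le_pow_left₀ (div_nonneg (by linarith) (by linarith)) ?_ _)
  rw [div_le_div_iff₀ (by linarith) hlam]
  nlinarith

lemma groen_lattice_finset_card_le {E : Type*} [NormedAddCommGroup E] [NormedSpace ℝ E]
    [FiniteDimensional ℝ E] [MeasurableSpace E] [BorelSpace E] [Nontrivial E]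
    (L : Submodule ℤ E) {lam t : ℝ} (hlam0 : 0 < lam)
    (hlow : ∀ v ∈ L, v ≠ 0 → lam ≤ ‖v‖) (ht : lam ≤ t)
    (G : Finset L) (hG : ∀ v ∈ G, (v : E) ≠ 0 ∧ ‖(v : E)‖ < t) :
    (G.card : ℝ) ≤ (3 * t / lam) ^ Module.finrank ℝ E := by

  set F : Finset E := G.map ⟨Subtype.val, Subtype.val_injective⟩ with hF
  have hcard : F.card = G.card := Finset.card_map _
  have hmem : ∀ w ∈ F, ∃ v ∈ G, (v : E) = w := by
    intro w hw
    simpa [hF] using hw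
  rw [← hcard]
  refine groen_packing_card_le hlam0 ht F ?_ ?_
  · intro v hv w hw hvw
    obtain ⟨v', hv', rfl⟩ := hmem v hv
    obtain ⟨w', hw', rfl⟩ := hmem w hw
    have hsub : (v' : E) - (w' : E) ∈ L := L.sub_mem v'.2 w'.2
    refine hlow _ hsub (fun h => hvw ?_)
    have := sub_eq_zero.mp h
    simp [this]
  · intro v hv
    obtain ⟨v', hv', rfl⟩ := hmem v hv
    exact (hG v' hv').2.le

lemma groen_lattice_set_finite {E : Type*} [NormedAddCommGroup E] [NormedSpace ℝ E]
    [FiniteDimensional ℝ E] [MeasurableSpace E] [BorelSpace E] [Nontrivial E]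
    (L : Submodule ℤ E) {lam t : ℝ} (hlam0 : 0 < lam)
    (hlow : ∀ v ∈ L, v ≠ 0 → lam ≤ ‖v‖) (ht : lam ≤ t) :
    {v : L | (v : E) ≠ 0 ∧ ‖(v : E)‖ < t}.Finite := by

  by_contra hinf
  have hinf' : {v : L | (v : E) ≠ 0 ∧ ‖(v : E)‖ < t}.Infinite := hinf
  set n₀ : ℕ := ⌈(3 * t / lam) ^ Module.finrank ℝ E⌉₊ + 1 with hn₀
  obtain ⟨G, hGsub, hGcard⟩ := hinf'.exists_subset_card_eq n₀
  have hb := groen_lattice_finset_card_le L hlam0 hlow ht G (fun v hv => hGsub hv)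
  rw [hGcard] at hb
  have h1 : (3 * t / lam) ^ Module.finrank ℝ E ≤ (⌈(3 * t / lam) ^ Module.finrank ℝ E⌉₊ : ℝ) :=
    Nat.le_ceil _
  rw [hn₀] at hb
  push_cast at hb
  linarith

lemma groen_integral_Ioi (a : ℝ) :
    ∫ t in Ioi a, 2 * π * t * Real.exp (-π * t ^ 2) = Real.exp (-π * a ^ 2) := by

  have hderiv : ∀ x ∈ Ici a, HasDerivAt (fun x => -Real.exp (-π * x ^ 2))
      (2 * π * x * Real.exp (-π * x ^ 2)) x := by
    intro x _
    have h1 : HasDerivAt (fun x : ℝ => -π * x ^ 2) (-π * (2 * x ^ 1)) x :=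
      (hasDerivAt_pow 2 x).const_mul (-π)
    have h2 : HasDerivAt (fun x => -Real.exp (-π * x ^ 2))
        (-(Real.exp (-π * x ^ 2) * (-π * (2 * x ^ 1)))) x := (h1.exp).neg
    convert h2 using 1
    ring
  have hint : IntegrableOn (fun t : ℝ => 2 * π * t * Real.exp (-π * t ^ 2)) (Ioi a) := by
    have := ((integrable_mul_exp_neg_mul_sq pi_pos).const_mul (2 * π)).integrableOn
      (s := Ioi a)
    refine this.congr_fun (fun x _ => by ring) measurableSet_Ioi
  have htend : Tendsto (fun x => -Real.exp (-π * x ^ 2)) atTop (𝓝 0) := by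
    rw [show (0:ℝ) = -0 by ring]
    refine Tendsto.neg ?_
    refine Real.tendsto_exp_atBot.comp ?_
    have h3 : Tendsto (fun x : ℝ => π * x ^ 2) atTop atTop :=
      (tendsto_pow_atTop two_ne_zero).const_mul_atTop pi_pos
    simpa [neg_mul] using tendsto_neg_atBot_iff.mpr h3
  have := integral_Ioi_of_hasDerivAt_of_tendsto' hderiv hint htend
  rw [this]
  simp

lemma groen_lam_facts {E : Type*} [NormedAddCommGroup E] [InnerProductSpace ℝ E]
    [FiniteDimensional ℝ E] (L : Submodule ℤ E) [DiscreteTopology L] [IsZLattice ℝ L]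
    (hr : 1 ≤ Module.finrank ℝ E) (lam : ℝ)
    (hlam : lam = sInf ((fun v : E => ‖v‖) '' {v : E | v ∈ L ∧ v ≠ 0})) :
    0 < lam ∧ ∀ v ∈ L, v ≠ 0 → lam ≤ ‖v‖ := by

  have hnt : Nontrivial E := Module.nontrivial_of_finrank_pos (by omega : 0 < Module.finrank ℝ E)
  -- there is a nonzero vector in L
  have hex : ∃ v : E, v ∈ L ∧ v ≠ 0 := by
    by_contra h
    push_neg at h
    have hsub : (L : Set E) ⊆ {0} := by
      intro v hv
      by_cases hv0 : v = 0
      · simp [hv0]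
      · exact absurd hv0 (by exact fun h' => h' (h v hv))
    have h1 : Submodule.span ℝ (L : Set E) ≤ Submodule.span ℝ {0} :=
      Submodule.span_mono hsub
    rw [IsZLattice.span_top, Submodule.span_zero_singleton] at h1
    obtain ⟨x, hx⟩ := exists_ne (0 : E)
    have : x ∈ (⊥ : Submodule ℝ E) := h1 (by simp)
    exact hx (by simpa using this)
  obtain ⟨v₀, hv₀L, hv₀⟩ := hex
  set S : Set ℝ := (fun v : E => ‖v‖) '' {v : E | v ∈ L ∧ v ≠ 0} with hS
  have hSne : S.Nonempty := ⟨‖v₀‖, ⟨v₀, ⟨hv₀L, hv₀⟩, rfl⟩⟩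
  have hSbdd : BddBelow S := ⟨0, fun x ⟨v, _, hv⟩ => hv ▸ norm_nonneg v⟩
  have hlow : ∀ v ∈ L, v ≠ 0 → lam ≤ ‖v‖ := by
    intro v hvL hv0
    rw [hlam]
    exact csInf_le hSbdd ⟨v, ⟨hvL, hv0⟩, rfl⟩
  -- discreteness gives a positive lower bound
  have hopen : IsOpen ({0} : Set L) := isOpen_discrete _
  rw [Metric.isOpen_iff] at hopen
  obtain ⟨ε, hε, hball⟩ := hopen 0 rfl
  have heps : ∀ x ∈ S, ε ≤ x := by
    rintro x ⟨v, ⟨hvL, hv0⟩, rfl⟩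
    by_contra hlt
    push_neg at hlt
    have : (⟨v, hvL⟩ : L) ∈ Metric.ball (0 : L) ε := by
      rw [Metric.mem_ball, Subtype.dist_eq, dist_eq_norm]
      simpa using hlt
    have := hball this
    simp only [Set.mem_singleton_iff] at this
    exact hv0 (by simpa [Subtype.ext_iff] using this)
  refine ⟨lt_of_lt_of_le hε ?_, hlow⟩
  rw [hlam]
  exact le_csInf hSne heps

lemma groen_rhs_eq {lam : ℝ} (hlam0 : 0 < lam) (r : ℕ) :
    (3:ℝ) ^ r * (π * lam ^ 2) ^ (-(r : ℝ) / 2) *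
        ∫ u in Ioi (π * lam ^ 2), u ^ ((r : ℝ) / 2) * Real.exp (-u) =
      ∫ t in Ioi lam, (3 * t / lam) ^ r * (2 * π * t * Real.exp (-π * t ^ 2)) := by

  have himg : (fun t : ℝ => π * t ^ 2) '' Ioi lam = Ioi (π * lam ^ 2) := by
    ext u
    simp only [mem_image, mem_Ioi]
    constructor
    · rintro ⟨t, ht, rfl⟩
      have : 0 < t := hlam0.trans ht
      nlinarith [pi_pos, mul_pos (sub_pos.mpr ht) (show (0:ℝ) < t + lam by linarith)]
    · intro hu
      refine ⟨Real.sqrt (u / π), ?_, ?_⟩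
      · rw [show lam = Real.sqrt (lam ^ 2) by rw [Real.sqrt_sq hlam0.le]]
        apply Real.sqrt_lt_sqrt (sq_nonneg _)
        rw [lt_div_iff₀ pi_pos]
        linarith
      · rw [Real.sq_sqrt (div_nonneg (by nlinarith [pi_pos, sq_nonneg lam]) pi_pos.le)]
        field_simp
  have hderiv : ∀ x ∈ Ioi lam, HasDerivWithinAt (fun t : ℝ => π * t ^ 2)
      (2 * π * x) (Ioi lam) x := by
    intro x _
    have : HasDerivAt (fun t : ℝ => π * t ^ 2) (π * (2 * x ^ 1)) x :=
      (hasDerivAt_pow 2 x).const_mul π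
    exact (this.congr_deriv (by ring)).hasDerivWithinAt
  have hinj : InjOn (fun t : ℝ => π * t ^ 2) (Ioi lam) := by
    have hmono : StrictMonoOn (fun t : ℝ => π * t ^ 2) (Ioi lam) := by
      intro a ha b hb hab
      simp only [mem_Ioi] at ha hb
      have ha0 : 0 < a := hlam0.trans ha
      simp only
      nlinarith [pi_pos, mul_pos (sub_pos.mpr hab) (show (0:ℝ) < a + b by linarith)]
    exact hmono.injOn
  have hsubst := integral_image_eq_integral_abs_deriv_smul measurableSet_Ioi hderiv hinj
    (fun u => u ^ ((r : ℝ) / 2) * Real.exp (-u))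
  rw [himg] at hsubst
  rw [hsubst, ← integral_const_mul]
  refine setIntegral_congr_fun measurableSet_Ioi (fun t ht => ?_)
  simp only [mem_Ioi] at ht
  have ht0 : 0 < t := hlam0.trans ht
  have h1 : (0:ℝ) < π * t ^ 2 := by positivity
  have h2 : (0:ℝ) < π * lam ^ 2 := by positivity
  have key : (π * lam ^ 2) ^ (-(r : ℝ) / 2) * (π * t ^ 2) ^ ((r : ℝ) / 2)
      = (t / lam) ^ r := by
    rw [show (-(r:ℝ)/2) = -((r:ℝ)/2) by ring, Real.rpow_neg h2.le,
      inv_mul_eq_div, ← Real.div_rpow h1.le h2.le,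
      show π * t ^ 2 / (π * lam ^ 2) = (t / lam) ^ 2 by field_simp]
    rw [← Real.rpow_natCast (t / lam) 2, ← Real.rpow_mul (by positivity)]
    rw [show ((2:ℕ):ℝ) * ((r:ℝ)/2) = (r:ℝ) by push_cast; ring, Real.rpow_natCast]
  have habs : |2 * π * t| = 2 * π * t := abs_of_pos (by positivity)
  rw [smul_eq_mul, habs, show Real.exp (-π * t ^ 2) = Real.exp (-(π * t ^ 2)) by rw [neg_mul]]
  calc (3:ℝ) ^ r * (π * lam ^ 2) ^ (-(r : ℝ) / 2) *
        (2 * π * t * ((π * t ^ 2) ^ ((r : ℝ) / 2) * Real.exp (-(π * t ^ 2))))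
      = (3:ℝ) ^ r * ((π * lam ^ 2) ^ (-(r : ℝ) / 2) * (π * t ^ 2) ^ ((r : ℝ) / 2)) *
        (2 * π * t * Real.exp (-(π * t ^ 2))) := by ring
    _ = (3:ℝ) ^ r * (t / lam) ^ r * (2 * π * t * Real.exp (-(π * t ^ 2))) := by
        rw [key]
    _ = (3 * t / lam) ^ r * (2 * π * t * Real.exp (-(π * t ^ 2))) := by
        rw [← mul_pow]; congr 2; ring

end GroenewegenAux

/-- Groenewegen's bound: for a ℤ-lattice `L` of rank `r ≥ 1` with first minimum `λ₁`,
`h⁰_θ(L) ≤ C(r, λ₁) = 3^r (π λ₁²)^{-r/2} ∫_{πλ₁²}^∞ u^{r/2} e^{-u} du`. -/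
theorem theta_le_groenewegen {E : Type*} [NormedAddCommGroup E] [InnerProductSpace ℝ E]
    [FiniteDimensional ℝ E] (L : Submodule ℤ E) [DiscreteTopology L] [IsZLattice ℝ L]
    (hr : 1 ≤ Module.finrank ℝ E) (lam : ℝ)
    (hlam : lam = sInf ((fun v : E => ‖v‖) '' {v : E | v ∈ L ∧ v ≠ 0})) :
    Real.log (∑' v : L, Real.exp (-π * ‖(v : E)‖ ^ 2)) ≤
      3 ^ Module.finrank ℝ E * (π * lam ^ 2) ^ (-(Module.finrank ℝ E : ℝ) / 2) *
        ∫ u in Set.Ioi (π * lam ^ 2), u ^ ((Module.finrank ℝ E : ℝ) / 2) * Real.exp (-u) := by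
  classical
  borelize E
  set r := Module.finrank ℝ E with hrdef
  haveI hnt : Nontrivial E := Module.nontrivial_of_finrank_pos (by omega : 0 < Module.finrank ℝ E)
  obtain ⟨hlam0, hlow⟩ := groen_lam_facts L hr lam hlam
  set g : ℝ → ℝ := fun t => 2 * π * t * Real.exp (-π * t ^ 2) with hgdef
  set f₁ : ℝ → ℝ := fun t => (3 * t / lam) ^ r * g t with hf₁def
  have hgmeas : Measurable g := by fun_prop
  have hgint : ∀ a : ℝ, IntegrableOn g (Ioi a) := by
    intro a
    have := ((integrable_mul_exp_neg_mul_sq pi_pos).const_mul (2 * π)).integrableOn (s := Ioi a)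
    exact this.congr_fun (fun x _ => by simp [hgdef]; ring) measurableSet_Ioi
  have hgnn : ∀ t : ℝ, 0 ≤ t → 0 ≤ g t := by
    intro t ht
    have := Real.exp_pos (-π * t ^ 2)
    have h2 : (0:ℝ) ≤ 2 * π * t := by nlinarith [pi_pos]
    exact mul_nonneg h2 this.le
  have hf₁int : IntegrableOn f₁ (Ioi lam) := by
    have hbase : Integrable (fun x : ℝ => x ^ ((r:ℝ) + 1) * Real.exp (-π * x ^ 2)) :=
      integrable_rpow_mul_exp_neg_mul_sq pi_pos (by have := Nat.cast_nonneg (α := ℝ) r; linarith)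
    have h2 : IntegrableOn (fun x : ℝ => (3 / lam) ^ r * (2 * π) *
        (x ^ ((r:ℝ) + 1) * Real.exp (-π * x ^ 2))) (Ioi lam) :=
      (hbase.const_mul _).integrableOn
    refine h2.congr_fun (fun x hx => ?_) measurableSet_Ioi
    have hx0 : 0 < x := hlam0.trans hx
    have hrpow : x ^ ((r:ℝ) + 1) = x ^ (r + 1 : ℕ) := by
      rw [show ((r:ℝ) + 1) = ((r + 1 : ℕ) : ℝ) by push_cast; ring, Real.rpow_natCast]
    simp only [hrpow]
    simp only [hf₁def, hgdef]
    rw [show 3 * x / lam = (3 / lam) * x by ring, mul_pow]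
    ring
  set I : ℝ := ∫ t in Ioi lam, f₁ t with hIdef
  have hI0 : 0 ≤ I := by
    refine setIntegral_nonneg measurableSet_Ioi (fun t ht => ?_)
    have ht0 : 0 < t := hlam0.trans ht
    have h1 : (0:ℝ) ≤ (3 * t / lam) ^ r := by positivity
    exact mul_nonneg h1 (hgnn t ht0.le)
  -- the ENNReal-valued comparison
  set fR : L → ℝ := fun v => Real.exp (-π * ‖(v : E)‖ ^ 2) with hfRdef
  set H : L → ℝ → ℝ≥0∞ := fun v t =>
    if v = (0 : L) then 0 else (Ioi ‖(v : E)‖).indicator (fun s => ENNReal.ofReal (g s)) t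
    with hHdef
  have hHmeas : ∀ v : L, Measurable (H v) := by
    intro v
    by_cases hv : v = 0
    · simp only [hHdef, hv, if_true]; exact measurable_const
    · simp only [hHdef, hv, if_false]
      exact (Measurable.indicator (ENNReal.measurable_ofReal.comp hgmeas) measurableSet_Ioi)
  have hterm : ∀ v : L,
      (if v = (0 : L) then 0 else ENNReal.ofReal (fR v)) = ∫⁻ t in Ioi lam, H v t := by
    intro v
    by_cases hv : v = 0
    · simp [hHdef, hv]
    · have hvE : (v : E) ≠ 0 := fun h => hv (Subtype.ext h)
      have hlowv : lam ≤ ‖(v : E)‖ := hlow _ v.2 hvE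
      simp only [hHdef, hv, if_false]
      rw [lintegral_indicator measurableSet_Ioi, Measure.restrict_restrict measurableSet_Ioi,
        Set.inter_eq_self_of_subset_left (Ioi_subset_Ioi hlowv)]
      have hnn : 0 ≤ᵐ[volume.restrict (Ioi ‖(v : E)‖)] g := by
        refine (ae_restrict_iff' measurableSet_Ioi).2 (ae_of_all _ (fun t ht => ?_))
        exact hgnn t ((norm_nonneg _).trans ht.le)
      rw [← ofReal_integral_eq_lintegral_ofReal (hgint ‖(v : E)‖) hnn,
        groen_integral_Ioi ‖(v : E)‖]
  set A : ℝ≥0∞ := ∑' v : L, (if v = (0 : L) then 0 else ENNReal.ofReal (fR v)) with hAdef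
  have hA1 : A = ∫⁻ t in Ioi lam, ∑' v : L, H v t := by
    rw [hAdef]
    simp_rw [hterm]
    exact (lintegral_tsum (fun v => (hHmeas v).aemeasurable)).symm
  have hpt : ∀ t ∈ Ioi lam, (∑' v : L, H v t) ≤ ENNReal.ofReal (f₁ t) := by
    intro t ht
    rw [mem_Ioi] at ht
    have ht0 : 0 < t := hlam0.trans ht
    set St : Set L := {v : L | (v : E) ≠ 0 ∧ ‖(v : E)‖ < t} with hStdef
    have hpteq : ∀ v : L, H v t = St.indicator (fun _ => ENNReal.ofReal (g t)) v := by
      intro v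
      by_cases hv : v = 0
      · rw [hv]
        have h0 : (0 : L) ∉ St := by simp [hStdef]
        simp [hHdef, Set.indicator_of_notMem h0]
      · have hvE : (v : E) ≠ 0 := fun h => hv (Subtype.ext h)
        by_cases hvt : ‖(v : E)‖ < t
        · have : v ∈ St := ⟨hvE, hvt⟩
          simp [hHdef, hv, Set.indicator_of_mem this, Set.indicator_of_mem (mem_Ioi.mpr hvt)]
        · have : v ∉ St := fun h => hvt h.2
          simp [hHdef, hv, Set.indicator_of_notMem this,
            Set.indicator_of_notMem (fun h => hvt (mem_Ioi.mp h))]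
    rw [tsum_congr hpteq]
    have hfin : St.Finite := groen_lattice_set_finite L hlam0 hlow ht.le
    have hcard : (hfin.toFinset.card : ℝ) ≤ (3 * t / lam) ^ r := by
      refine groen_lattice_finset_card_le L hlam0 hlow ht.le hfin.toFinset (fun v hv => ?_)
      exact hfin.mem_toFinset.mp hv
    rw [tsum_eq_sum (s := hfin.toFinset)
      (fun v hv => Set.indicator_of_notMem (fun h => hv (hfin.mem_toFinset.mpr h)) _)]
    calc ∑ v ∈ hfin.toFinset, St.indicator (fun _ => ENNReal.ofReal (g t)) v
        ≤ ∑ _v ∈ hfin.toFinset, ENNReal.ofReal (g t) :=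
          Finset.sum_le_sum (fun v _ => Set.indicator_le_self' (fun _ _ => zero_le) v)
      _ = (hfin.toFinset.card : ℝ≥0∞) * ENNReal.ofReal (g t) := by
          rw [Finset.sum_const, nsmul_eq_mul]
      _ ≤ ENNReal.ofReal ((3 * t / lam) ^ r) * ENNReal.ofReal (g t) := by
          refine mul_le_mul_left ?_ _
          rw [show ((hfin.toFinset.card : ℝ≥0∞)) = ENNReal.ofReal (hfin.toFinset.card : ℝ) by
            simp [ENNReal.ofReal_natCast]]
          exact ENNReal.ofReal_le_ofReal hcard
      _ = ENNReal.ofReal (f₁ t) := by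
          rw [← ENNReal.ofReal_mul (by positivity)]
  have hnnae : 0 ≤ᵐ[volume.restrict (Ioi lam)] f₁ := by
    refine (ae_restrict_iff' measurableSet_Ioi).2 (ae_of_all _ (fun t ht => ?_))
    have ht0 : 0 < t := hlam0.trans ht
    have h1 : (0:ℝ) ≤ (3 * t / lam) ^ r := by positivity
    exact mul_nonneg h1 (hgnn t ht0.le)
  have hA2 : A ≤ ENNReal.ofReal I := by
    rw [hA1, hIdef, ofReal_integral_eq_lintegral_ofReal hf₁int hnnae]
    exact setLIntegral_mono' measurableSet_Ioi hpt
  -- summability of the theta series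
  have hAne : A ≠ ⊤ := (hA2.trans_lt ENNReal.ofReal_lt_top).ne
  have hT : (∑' v : L, ENNReal.ofReal (fR v)) = ENNReal.ofReal (fR 0) + A := by
    rw [hAdef, ENNReal.tsum_eq_add_tsum_ite (0 : L)]
    congr 1
    exact tsum_congr (fun v => by split_ifs <;> rfl)
  have hTne : (∑' v : L, ENNReal.ofReal (fR v)) ≠ ⊤ := by
    rw [hT]
    exact ENNReal.add_ne_top.mpr ⟨ENNReal.ofReal_ne_top, hAne⟩
  have hsum : Summable fR := by
    have h1 : (∑' v : L, ((fR v).toNNReal : ℝ≥0∞)) ≠ ⊤ := by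
      exact hTne
    have h2 : Summable (fun v : L => (fR v).toNNReal) :=
      ENNReal.tsum_coe_ne_top_iff_summable.mp h1
    have h3 : Summable (fun v : L => ((fR v).toNNReal : ℝ)) := NNReal.summable_coe.mpr h2
    exact h3.congr (fun v => Real.coe_toNNReal _ (Real.exp_pos _).le)
  set Sr : ℝ := ∑' v : L, (if v = (0 : L) then 0 else fR v) with hSrdef
  have hsum' : Summable (fun v : L => if v = (0 : L) then 0 else fR v) := by
    refine Summable.of_nonneg_of_le (fun v => ?_) (fun v => ?_) hsum
    · split_ifs <;> [exact le_rfl; exact (Real.exp_pos _).le]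
    · split_ifs <;> [exact (Real.exp_pos _).le; exact le_rfl]
  have hSr0 : 0 ≤ Sr := tsum_nonneg (fun v => by split_ifs <;> [exact le_rfl;
    exact (Real.exp_pos _).le])
  have hSrA : ENNReal.ofReal Sr = A := by
    rw [hSrdef, ENNReal.ofReal_tsum_of_nonneg (fun v => by split_ifs <;> [exact le_rfl;
      exact (Real.exp_pos _).le]) hsum', hAdef]
    exact tsum_congr (fun v => by split_ifs <;> simp)
  have hSrI : Sr ≤ I := by
    have := hSrA ▸ hA2
    exact (ENNReal.ofReal_le_ofReal_iff hI0).mp this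
  have hsplit : (∑' v : L, fR v) = fR 0 + Sr := Summable.tsum_eq_add_tsum_ite hsum 0
  have hfR0 : fR 0 = 1 := by simp [hfRdef]
  have hlog : Real.log (∑' v : L, fR v) ≤ Sr := by
    rw [hsplit, hfR0]
    have hpos : (0:ℝ) < 1 + Sr := by linarith
    have := Real.log_le_sub_one_of_pos hpos
    linarith
  have hfinal := hlog.trans hSrI
  rw [hIdef] at hfinal
  simp only [hf₁def, hgdef] at hfinal
  rw [← groen_rhs_eq hlam0 r] at hfinal
  exact hfinal
end

section
/- Let E be a finite-dimensional real inner product space of dimension r ≥ 1 and L ⊆ E a ℤ-lattice whose first minimum λ₁ = λ₁(L) satisfies λ₁ > (r/(2π))^{1/2}. Then h⁰_θ(L) ≤ 3^r · (1 − r/(2πλ₁²))^{−1} · e^{−πλ₁²}. -/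
open Real

open MeasureTheory Filter Set Topology ENNReal in
/-- Packing bound: points that are pairwise `lam`-separated and of norm at most `R`
are at most `((R + lam/2)/(lam/2))^dim` in number. -/
lemma my_packing {E : Type*} [NormedAddCommGroup E] [NormedSpace ℝ E] [FiniteDimensional ℝ E]
    {lam R : ℝ} (hlam : 0 < lam) (hR : 0 < R)
    (s : Finset E) (hsep : ∀ u ∈ s, ∀ v ∈ s, u ≠ v → lam ≤ dist u v)
    (hnorm : ∀ v ∈ s, ‖v‖ ≤ R) :
    (s.card : ℝ) * (lam / 2) ^ Module.finrank ℝ E ≤ (R + lam / 2) ^ Module.finrank ℝ E := by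
  borelize E
  set μ := (Module.finBasis ℝ E).addHaar with hμ
  have hdisj : (↑s : Set E).PairwiseDisjoint (fun v => Metric.ball v (lam / 2)) := by
    intro u hu v hv huv
    exact Metric.ball_disjoint_ball (by linarith [hsep u hu v hv huv])
  have hsub : (⋃ v ∈ s, Metric.ball v (lam / 2)) ⊆ Metric.ball 0 (R + lam / 2) := by
    intro x hx
    simp only [Set.mem_iUnion, Metric.mem_ball, exists_prop] at hx ⊢
    obtain ⟨v, hv, hxv⟩ := hx
    have h1 : dist x 0 ≤ dist x v + dist v 0 := dist_triangle _ _ _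
    have h2 : dist v 0 ≤ R := by simpa [dist_eq_norm] using hnorm v hv
    linarith
  have h1 : μ (⋃ v ∈ s, Metric.ball v (lam / 2))
      = ∑ v ∈ s, μ (Metric.ball v (lam / 2)) :=
    measure_biUnion_finset hdisj (fun v _ => measurableSet_ball)
  have h2 : ∑ v ∈ s, μ (Metric.ball v (lam / 2))
      = (s.card : ℝ≥0∞) * μ (Metric.ball 0 (lam / 2)) := by
    rw [Finset.sum_congr rfl (fun v _ => Measure.addHaar_ball_center μ v (lam / 2))]
    simp [Finset.sum_const, nsmul_eq_mul]
  have h3 : (s.card : ℝ≥0∞) * μ (Metric.ball 0 (lam / 2)) ≤ μ (Metric.ball 0 (R + lam / 2)) := by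
    rw [← h2, ← h1]; exact measure_mono hsub
  rw [Measure.addHaar_ball_of_pos μ _ (by linarith : (0:ℝ) < lam / 2),
    Measure.addHaar_ball_of_pos μ _ (by linarith : (0:ℝ) < R + lam / 2), ← mul_assoc] at h3
  have hb0 : μ (Metric.ball (0:E) 1) ≠ 0 := (Metric.measure_ball_pos μ 0 one_pos).ne'
  have hbt : μ (Metric.ball (0:E) 1) ≠ ⊤ := measure_ball_lt_top.ne
  have h4 : (s.card : ℝ≥0∞) * ENNReal.ofReal ((lam / 2) ^ Module.finrank ℝ E)
      ≤ ENNReal.ofReal ((R + lam / 2) ^ Module.finrank ℝ E) :=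
    (ENNReal.mul_le_mul_iff_left hb0 hbt).mp h3
  rw [← ENNReal.ofReal_natCast, ← ENNReal.ofReal_mul (by positivity)] at h4
  exact (ENNReal.ofReal_le_ofReal_iff (by positivity)).mp h4

open MeasureTheory Filter Set Topology ENNReal in
/-- Gaussian tail integral. -/
lemma my_gauss_tail {a : ℝ} (ha : 0 < a) :
    ∫ t in Set.Ioi a, 2 * π * t * Real.exp (-π * t ^ 2) = Real.exp (-π * a ^ 2) := by
  have hderiv : ∀ t ∈ Set.Ici a, HasDerivAt (fun t : ℝ => -Real.exp (-π * t ^ 2))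
      (2 * π * t * Real.exp (-π * t ^ 2)) t := by
    intro t _
    have h1 : HasDerivAt (fun t : ℝ => -π * t ^ 2) (-π * (2 * t)) t := by
      simpa using (hasDerivAt_pow 2 t).const_mul (-π)
    have h2 := h1.exp.neg
    refine h2.congr_deriv ?_
    ring
  have hint : IntegrableOn (fun t : ℝ => 2 * π * t * Real.exp (-π * t ^ 2)) (Set.Ioi a) := by
    have := ((integrable_mul_exp_neg_mul_sq pi_pos).const_mul (2 * π)).integrableOn
      (s := Set.Ioi a)
    simpa [mul_assoc] using this
  have htend : Tendsto (fun t : ℝ => -Real.exp (-π * t ^ 2)) atTop (𝓝 0) := by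
    have h2 : Tendsto (fun t : ℝ => π * t ^ 2) atTop atTop :=
      (tendsto_pow_atTop (two_ne_zero)).const_mul_atTop pi_pos
    have h3 : Tendsto (fun t : ℝ => -π * t ^ 2) atTop atBot := by
      have := tendsto_neg_atTop_atBot.comp h2
      simpa [Function.comp_def, neg_mul] using this
    have h4 := (Real.tendsto_exp_atBot.comp h3).neg
    simpa using h4
  have := integral_Ioi_of_hasDerivAt_of_tendsto' hderiv hint htend
  simpa using this

open MeasureTheory Filter Set Topology ENNReal in
lemma my_integrable_pow (n : ℕ) :
    Integrable (fun t : ℝ => t ^ n * Real.exp (-π * t ^ 2)) := by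
  have h : (-1 : ℝ) < (n : ℝ) := lt_of_lt_of_le neg_one_lt_zero (Nat.cast_nonneg n)
  simpa [Real.rpow_natCast] using integrable_rpow_mul_exp_neg_mul_sq pi_pos h

open MeasureTheory Filter Set Topology ENNReal in
/-- The main integral comparison. -/
lemma my_lint_bound {m : ℕ} {lam : ℝ} (hlam : 0 < lam)
    (hb : ((m : ℝ) + 1) < 2 * π * lam ^ 2) :
    ∫⁻ t in Set.Ioi lam,
        ENNReal.ofReal ((2 * π * t * Real.exp (-π * t ^ 2)) * (3 * t / lam) ^ (m + 1))
      ≤ ENNReal.ofReal (3 ^ (m + 1) * (1 - ((m : ℝ) + 1) / (2 * π * lam ^ 2))⁻¹ *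
          Real.exp (-π * lam ^ 2)) := by
  set r : ℕ := m + 1 with hrdef
  set c : ℝ := (1 - ((m : ℝ) + 1) / (2 * π * lam ^ 2))⁻¹ with hc
  have h2pl : (0:ℝ) < 2 * π * lam ^ 2 := by positivity
  have hd : (0:ℝ) < 1 - ((m : ℝ) + 1) / (2 * π * lam ^ 2) := by
    rw [sub_pos, div_lt_one h2pl]; exact hb
  have hcpos : 0 < c := by rw [hc]; positivity
  set f : ℝ → ℝ := fun t => (2 * π * t * Real.exp (-π * t ^ 2)) * (3 * t / lam) ^ (m + 1)
    with hf
  set φ : ℝ → ℝ := fun t => c * (3 / lam) ^ (m + 1) *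
      ((2 * π) * t ^ (m + 2) - ((m : ℝ) + 1) * t ^ m) * Real.exp (-π * t ^ 2) with hφ
  -- integrability
  have hfint : IntegrableOn f (Set.Ioi lam) := by
    have h1 := ((my_integrable_pow (m + 2)).const_mul
      (2 * π * 3 ^ (m + 1) / lam ^ (m + 1))).integrableOn (s := Set.Ioi lam)
    refine h1.congr_fun (fun t _ => ?_) measurableSet_Ioi
    rw [hf]
    have hl : lam ≠ 0 := hlam.ne'
    simp only [div_pow]
    field_simp
    ring
  have hφint : IntegrableOn φ (Set.Ioi lam) := by
    have h1 := (my_integrable_pow (m + 2)).const_mul (c * (3 / lam) ^ (m + 1) * (2 * π))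
    have h2 := (my_integrable_pow m).const_mul (c * (3 / lam) ^ (m + 1) * ((m : ℝ) + 1))
    have h3 := (h1.sub h2).integrableOn (s := Set.Ioi lam)
    refine h3.congr_fun (fun t _ => ?_) measurableSet_Ioi
    simp only [Pi.sub_apply]
    rw [hφ]; ring
  -- pointwise comparison
  have hcomp : ∀ t ∈ Set.Ioi lam, f t ≤ φ t := by
    intro t ht
    have htpos : 0 < t := hlam.trans ht
    have ht2 : lam ^ 2 ≤ t ^ 2 := by nlinarith [le_of_lt (show lam < t from ht)]
    have key : 2 * π * t ^ 2 ≤ c * (2 * π * t ^ 2 - ((m : ℝ) + 1)) := by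
      have h1 : (1 - ((m : ℝ) + 1) / (2 * π * lam ^ 2)) * (2 * π * t ^ 2)
          ≤ 2 * π * t ^ 2 - ((m : ℝ) + 1) := by
        have h2 : ((m : ℝ) + 1) ≤ ((m : ℝ) + 1) * t ^ 2 / lam ^ 2 := by
          rw [le_div_iff₀ (by positivity)]
          nlinarith
        have h3 : (1 - ((m : ℝ) + 1) / (2 * π * lam ^ 2)) * (2 * π * t ^ 2)
            = 2 * π * t ^ 2 - ((m : ℝ) + 1) * t ^ 2 / lam ^ 2 := by
          field_simp
        linarith
      calc 2 * π * t ^ 2 = c * ((1 - ((m : ℝ) + 1) / (2 * π * lam ^ 2)) * (2 * π * t ^ 2)) := by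
            rw [hc, inv_mul_cancel_left₀ hd.ne']
        _ ≤ c * (2 * π * t ^ 2 - ((m : ℝ) + 1)) := by
            exact mul_le_mul_of_nonneg_left h1 hcpos.le
    have hA : (0:ℝ) ≤ t ^ m * (3 / lam) ^ (m + 1) * Real.exp (-π * t ^ 2) := by positivity
    have hfeq : f t = (2 * π * t ^ 2) * (t ^ m * (3 / lam) ^ (m + 1) * Real.exp (-π * t ^ 2)) := by
      rw [hf]; ring
    have hφeq : φ t = (c * (2 * π * t ^ 2 - ((m : ℝ) + 1))) *
        (t ^ m * (3 / lam) ^ (m + 1) * Real.exp (-π * t ^ 2)) := by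
      rw [hφ]; ring
    rw [hfeq, hφeq]
    exact mul_le_mul_of_nonneg_right key hA
  -- FTC for φ
  have hFTC : ∫ t in Set.Ioi lam, φ t = 3 ^ (m + 1) * c * Real.exp (-π * lam ^ 2) := by
    have hderiv : ∀ t ∈ Set.Ici lam, HasDerivAt
        (fun t : ℝ => -(c * (3 / lam) ^ (m + 1)) * (t ^ (m + 1) * Real.exp (-π * t ^ 2)))
        (φ t) t := by
      intro t _
      have h1 : HasDerivAt (fun t : ℝ => -π * t ^ 2) (-π * (2 * t)) t := by
        simpa using (hasDerivAt_pow 2 t).const_mul (-π)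
      have h2 := ((hasDerivAt_pow (m + 1) t).mul h1.exp).const_mul
        (-(c * (3 / lam) ^ (m + 1)))
      refine h2.congr_deriv ?_
      rw [hφ]
      push_cast
      ring
    have htend : Tendsto
        (fun t : ℝ => -(c * (3 / lam) ^ (m + 1)) * (t ^ (m + 1) * Real.exp (-π * t ^ 2)))
        atTop (𝓝 0) := by
      have h0 : Tendsto (fun t : ℝ => t ^ (m + 1) * Real.exp (-π * t ^ 2)) atTop (𝓝 0) := by
        have hlo := (rpow_mul_exp_neg_mul_sq_isLittleO_exp_neg pi_pos
          (((m : ℝ) + 1))).isBigO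
        have hrhs : Tendsto (fun x : ℝ => Real.exp (-(1 / 2) * x)) atTop (𝓝 0) := by
          rw [Real.tendsto_exp_comp_nhds_zero]
          exact (tendsto_id (α := ℝ)).const_mul_atTop_of_neg (by norm_num)
        have h1 := hlo.trans_tendsto hrhs
        have heq : (fun x : ℝ => x ^ (((m : ℝ) + 1)) * Real.exp (-π * x ^ 2))
            = fun x : ℝ => x ^ (m + 1) * Real.exp (-π * x ^ 2) := by
          funext x
          rw [show ((m : ℝ) + 1) = ((m + 1 : ℕ) : ℝ) by push_cast; ring, Real.rpow_natCast]
        rwa [heq] at h1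
      have := h0.const_mul (-(c * (3 / lam) ^ (m + 1)))
      simpa [mul_comm] using this
    have := integral_Ioi_of_hasDerivAt_of_tendsto' hderiv hφint htend
    rw [this]
    have hlamne : lam ^ (m + 1) ≠ 0 := by positivity
    have hl : lam ≠ 0 := hlam.ne'
    simp only [div_pow]
    field_simp
    ring
  -- put together
  have hreal : ∫ t in Set.Ioi lam, f t ≤ 3 ^ (m + 1) * c * Real.exp (-π * lam ^ 2) := by
    rw [← hFTC]
    exact setIntegral_mono_on hfint hφint measurableSet_Ioi hcomp
  have hnn : 0 ≤ᵐ[volume.restrict (Set.Ioi lam)] f := by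
    refine ae_restrict_of_forall_mem measurableSet_Ioi (fun t ht => ?_)
    have htpos : 0 < t := hlam.trans ht
    rw [hf]
    positivity
  rw [← ofReal_integral_eq_lintegral_ofReal hfint hnn]
  exact ENNReal.ofReal_le_ofReal hreal

open MeasureTheory Filter Set Topology ENNReal in
/-- If the first minimum `λ₁` of a rank-`r` ℤ-lattice `L` satisfies `λ₁ > (r/(2π))^{1/2}`,
then `h⁰_θ(L) ≤ 3^r (1 - r/(2πλ₁²))⁻¹ e^{-πλ₁²}`. -/
theorem theta_le_of_large_first_minimum {E : Type*} [NormedAddCommGroup E]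
    [InnerProductSpace ℝ E] [FiniteDimensional ℝ E]
    (L : Submodule ℤ E) [DiscreteTopology L] [IsZLattice ℝ L]
    (hr : 1 ≤ Module.finrank ℝ E) (lam : ℝ)
    (hlam : lam = sInf ((fun v : E => ‖v‖) '' {v : E | v ∈ L ∧ v ≠ 0}))
    (hbig : Real.sqrt ((Module.finrank ℝ E : ℝ) / (2 * π)) < lam) :
    Real.log (∑' v : L, Real.exp (-π * ‖(v : E)‖ ^ 2)) ≤
      3 ^ Module.finrank ℝ E *
        (1 - (Module.finrank ℝ E : ℝ) / (2 * π * lam ^ 2))⁻¹ * Real.exp (-π * lam ^ 2) := by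
  classical
  set r : ℕ := Module.finrank ℝ E with hrdef
  have hlam0 : 0 < lam := (Real.sqrt_nonneg _).trans_lt hbig
  have hsep : ∀ v : E, v ∈ L → v ≠ 0 → lam ≤ ‖v‖ := by
    intro v hv hv0
    rw [hlam]
    refine csInf_le ⟨0, ?_⟩ ⟨v, ⟨hv, hv0⟩, rfl⟩
    rintro x ⟨w, _, rfl⟩
    exact norm_nonneg w
  have hrlt : ((r : ℝ)) < 2 * π * lam ^ 2 := by
    have h2 : Real.sqrt ((r : ℝ) / (2 * π)) ^ 2 < lam ^ 2 :=
      pow_lt_pow_left₀ hbig (Real.sqrt_nonneg _) two_ne_zero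
    rw [Real.sq_sqrt (by positivity)] at h2
    rw [div_lt_iff₀ (by positivity)] at h2
    nlinarith [h2]
  have h2pl : (0:ℝ) < 2 * π * lam ^ 2 := by positivity
  have hd : (0:ℝ) < 1 - (r : ℝ) / (2 * π * lam ^ 2) := by
    rw [sub_pos, div_lt_one h2pl]; exact hrlt
  set T : ℝ := 3 ^ r * (1 - (r : ℝ) / (2 * π * lam ^ 2))⁻¹ * Real.exp (-π * lam ^ 2) with hT
  have hT0 : 0 < T := by rw [hT]; positivity
  obtain ⟨m, hm⟩ : ∃ m, r = m + 1 := ⟨r - 1, (Nat.succ_pred_eq_of_pos hr).symm⟩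
  -- counting bound
  have hcard : ∀ t : ℝ, lam < t → ∀ s : Finset E, (∀ v ∈ s, v ∈ L) → (∀ v ∈ s, ‖v‖ ≤ t) →
      (s.card : ℝ) ≤ (3 * t / lam) ^ r := by
    intro t ht s hsL hsn
    have htpos : 0 < t := hlam0.trans ht
    have hsep' : ∀ u ∈ s, ∀ v ∈ s, u ≠ v → lam ≤ dist u v := by
      intro u hu v hv huv
      rw [dist_eq_norm]
      exact hsep _ (sub_mem (hsL u hu) (hsL v hv)) (sub_ne_zero.mpr huv)
    have h := my_packing hlam0 htpos s hsep' hsn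
    have h2 : (t + lam / 2) ≤ (3 * t / lam) * (lam / 2) := by
      have h3 : (3 * t / lam) * (lam / 2) = 3 * t / 2 := by field_simp
      rw [h3]; linarith
    have h3 : (t + lam / 2) ^ r ≤ ((3 * t / lam) * (lam / 2)) ^ r :=
      pow_le_pow_left₀ (by linarith) h2 r
    rw [mul_pow] at h3
    have h5 : (0:ℝ) < (lam / 2) ^ r := by positivity
    exact le_of_mul_le_mul_right (h.trans h3) h5
  -- the Gaussian weight
  set g : ℝ → ℝ := fun t => 2 * π * t * Real.exp (-π * t ^ 2) with hg
  have hgmeas : Measurable g := by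
    rw [hg]; fun_prop
  have hnormv : ∀ v : {v : L // v ≠ 0}, lam ≤ ‖((v : L) : E)‖ := by
    intro v
    refine hsep _ (v : L).2 ?_
    simpa using v.2
  have hμv : ∀ v : {v : L // v ≠ 0},
      (∫⁻ t in Set.Ioi lam,
        (Set.Ioi ‖((v : L) : E)‖).indicator (fun t => ENNReal.ofReal (g t)) t)
      = ENNReal.ofReal (Real.exp (-π * ‖((v : L) : E)‖ ^ 2)) := by
    intro v
    have hv := hnormv v
    have hvpos : 0 < ‖((v : L) : E)‖ := lt_of_lt_of_le hlam0 hv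
    rw [lintegral_indicator measurableSet_Ioi,
      Measure.restrict_restrict measurableSet_Ioi, Set.Ioi_inter_Ioi,
      sup_eq_left.mpr hv]
    have hint : IntegrableOn g (Set.Ioi ‖((v : L) : E)‖) := by
      have := ((integrable_mul_exp_neg_mul_sq pi_pos).const_mul (2 * π)).integrableOn
        (s := Set.Ioi ‖((v : L) : E)‖)
      rw [hg]; simpa [mul_assoc] using this
    have hnn : 0 ≤ᵐ[volume.restrict (Set.Ioi ‖((v : L) : E)‖)] g := by
      refine ae_restrict_of_forall_mem measurableSet_Ioi (fun t ht => ?_)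
      have htpos : 0 < t := lt_trans hvpos ht
      simp only [hg]
      positivity
    rw [← ofReal_integral_eq_lintegral_ofReal hint hnn]
    rw [hg]
    rw [my_gauss_tail hvpos]
  -- main ENNReal estimate on nonzero vectors
  have hswap : ∑' (v : {v : L // v ≠ 0}), ENNReal.ofReal (Real.exp (-π * ‖((v : L) : E)‖ ^ 2))
      ≤ ENNReal.ofReal T := by
    have hb' : ((m : ℝ) + 1) < 2 * π * lam ^ 2 := by
      rw [hm] at hrlt; push_cast at hrlt; exact hrlt
    calc ∑' (v : {v : L // v ≠ 0}), ENNReal.ofReal (Real.exp (-π * ‖((v : L) : E)‖ ^ 2))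
        = ∑' (v : {v : L // v ≠ 0}), ∫⁻ t in Set.Ioi lam,
            (Set.Ioi ‖((v : L) : E)‖).indicator (fun t => ENNReal.ofReal (g t)) t :=
          tsum_congr fun v => (hμv v).symm
      _ = ∫⁻ t in Set.Ioi lam, ∑' (v : {v : L // v ≠ 0}),
            (Set.Ioi ‖((v : L) : E)‖).indicator (fun t => ENNReal.ofReal (g t)) t := by
          refine (lintegral_tsum fun v => ?_).symm
          exact ((hgmeas.ennreal_ofReal).indicator measurableSet_Ioi).aemeasurable
      _ ≤ ∫⁻ t in Set.Ioi lam, ENNReal.ofReal (g t * (3 * t / lam) ^ r) := by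
          refine setLIntegral_mono' measurableSet_Ioi (fun t ht => ?_)
          have htpos : 0 < t := hlam0.trans ht
          have hgt : 0 ≤ g t := by simp only [hg]; positivity
          rw [ENNReal.ofReal_mul hgt]
          have step1 : ∑' (v : {v : L // v ≠ 0}),
              (Set.Ioi ‖((v : L) : E)‖).indicator (fun _ => ENNReal.ofReal (g t)) t
              = ENNReal.ofReal (g t) * ∑' (v : {v : L // v ≠ 0}),
                (Set.Ioi ‖((v : L) : E)‖).indicator (fun _ => (1 : ℝ≥0∞)) t := by
            rw [← ENNReal.tsum_mul_left]
            refine tsum_congr fun v => ?_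
            by_cases h : t ∈ Set.Ioi ‖((v : L) : E)‖ <;>
              simp [Set.indicator_apply, h]
          have hind : (fun v : {v : L // v ≠ 0} =>
              (Set.Ioi ‖((v : L) : E)‖).indicator (fun t => ENNReal.ofReal (g t)) t)
              = fun v : {v : L // v ≠ 0} =>
              (Set.Ioi ‖((v : L) : E)‖).indicator (fun _ => ENNReal.ofReal (g t)) t := by
            funext v
            by_cases h : t ∈ Set.Ioi ‖((v : L) : E)‖ <;> simp [Set.indicator_apply, h]
          rw [hind, step1]
          refine mul_le_mul_right ?_ _
          rw [ENNReal.tsum_eq_iSup_sum]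
          refine iSup_le fun s => ?_
          have hsum : (∑ v ∈ s, (Set.Ioi ‖((v : L) : E)‖).indicator (fun _ => (1:ℝ≥0∞)) t)
              = ((s.filter (fun v : {v : L // v ≠ 0} => ‖((v : L) : E)‖ < t)).card : ℝ≥0∞) := by
            rw [Finset.card_filter]
            push_cast
            refine Finset.sum_congr rfl fun v _ => ?_
            by_cases h : ‖((v : L) : E)‖ < t <;>
              simp [Set.indicator_apply, Set.mem_Ioi, h]
          rw [hsum]
          have hinj : Function.Injective (fun v : {v : L // v ≠ 0} => ((v : L) : E)) := by
            intro a b hab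
            exact Subtype.ext (Subtype.ext hab)
          have hcards : ((s.filter (fun v : {v : L // v ≠ 0} => ‖((v : L) : E)‖ < t)).image
              (fun v : {v : L // v ≠ 0} => ((v : L) : E))).card
              = (s.filter (fun v : {v : L // v ≠ 0} => ‖((v : L) : E)‖ < t)).card :=
            Finset.card_image_of_injective _ hinj
          have hb2 : (((s.filter (fun v : {v : L // v ≠ 0} => ‖((v : L) : E)‖ < t)).image
              (fun v : {v : L // v ≠ 0} => ((v : L) : E))).card : ℝ) ≤ (3 * t / lam) ^ r := by
            refine hcard t ht _ ?_ ?_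
            · intro v hv
              simp only [Finset.mem_image, Finset.mem_filter] at hv
              obtain ⟨w, _, rfl⟩ := hv
              exact (w : L).2
            · intro v hv
              simp only [Finset.mem_image, Finset.mem_filter] at hv
              obtain ⟨w, ⟨_, hw⟩, rfl⟩ := hv
              exact hw.le
          rw [hcards] at hb2
          calc ((s.filter (fun v : {v : L // v ≠ 0} => ‖((v : L) : E)‖ < t)).card : ℝ≥0∞)
              = ENNReal.ofReal ((s.filter
                  (fun v : {v : L // v ≠ 0} => ‖((v : L) : E)‖ < t)).card : ℝ) := by
                rw [ENNReal.ofReal_natCast]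
            _ ≤ ENNReal.ofReal ((3 * t / lam) ^ r) := ENNReal.ofReal_le_ofReal hb2
      _ = ∫⁻ t in Set.Ioi lam,
            ENNReal.ofReal ((2 * π * t * Real.exp (-π * t ^ 2)) * (3 * t / lam) ^ (m + 1)) := by
          rw [hg, hm]
      _ ≤ ENNReal.ofReal (3 ^ (m + 1) * (1 - ((m : ℝ) + 1) / (2 * π * lam ^ 2))⁻¹ *
            Real.exp (-π * lam ^ 2)) := my_lint_bound hlam0 hb'
      _ = ENNReal.ofReal T := by
          rw [hT, hm]
          push_cast
          ring_nf
  -- full sum bound in ℝ≥0∞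
  have hfull : ∑' (v : L), ENNReal.ofReal (Real.exp (-π * ‖(v : E)‖ ^ 2))
      ≤ ENNReal.ofReal (1 + T) := by
    rw [← Summable.tsum_add_tsum_compl (s := ({0} : Set L)) ENNReal.summable ENNReal.summable,
      ENNReal.ofReal_add zero_le_one hT0.le]
    refine add_le_add ?_ hswap
    have h1 := tsum_subtype ({0} : Set L)
      (fun v : L => ENNReal.ofReal (Real.exp (-π * ‖(v : E)‖ ^ 2)))
    rw [h1, tsum_eq_single (0 : L)
      (fun b hb => Set.indicator_of_notMem (by simpa using hb) _)]
    simp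
  -- back to the reals
  have hφnn : ∀ v : L, 0 ≤ Real.exp (-π * ‖(v : E)‖ ^ 2) := fun v => (Real.exp_pos _).le
  have hsum_le : ∀ u : Finset L, ∑ v ∈ u, Real.exp (-π * ‖(v : E)‖ ^ 2) ≤ 1 + T := by
    intro u
    have h1 : ENNReal.ofReal (∑ v ∈ u, Real.exp (-π * ‖(v : E)‖ ^ 2))
        = ∑ v ∈ u, ENNReal.ofReal (Real.exp (-π * ‖(v : E)‖ ^ 2)) :=
      ENNReal.ofReal_sum_of_nonneg (fun v _ => hφnn v)
    have h2 : (∑ v ∈ u, ENNReal.ofReal (Real.exp (-π * ‖(v : E)‖ ^ 2)))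
        ≤ ∑' (v : L), ENNReal.ofReal (Real.exp (-π * ‖(v : E)‖ ^ 2)) := ENNReal.sum_le_tsum u
    have h3 := h1 ▸ (h2.trans hfull)
    exact (ENNReal.ofReal_le_ofReal_iff (by positivity)).mp h3
  have hs : Summable (fun v : L => Real.exp (-π * ‖(v : E)‖ ^ 2)) :=
    summable_of_sum_le hφnn hsum_le
  have htsum_le : ∑' (v : L), Real.exp (-π * ‖(v : E)‖ ^ 2) ≤ 1 + T :=
    Summable.tsum_le_of_sum_le hs hsum_le
  have h1le : 1 ≤ ∑' (v : L), Real.exp (-π * ‖(v : E)‖ ^ 2) := by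
    have := Summable.le_tsum hs 0 (fun v _ => hφnn v)
    simpa using this
  have hlog := Real.log_le_sub_one_of_pos (lt_of_lt_of_le one_pos h1le)
  calc Real.log (∑' (v : L), Real.exp (-π * ‖(v : E)‖ ^ 2))
      ≤ (∑' (v : L), Real.exp (-π * ‖(v : E)‖ ^ 2)) - 1 := hlog
    _ ≤ T := by linarith
end

section
/- Let (E_n)_{n ∈ ℕ} be a sequence of finite-dimensional real inner product spaces and, for each n, let L_n ⊆ E_n be a nonzero ℤ-lattice. Suppose there exist constants C, C₃, A, A₃ > 0 and a real number τ with 0 < τ < 1 such that for all n: rank(L_n) ≤ C₃ · e^{A₃√n} and λ₁(L_n) ≥ C · e^{−A√n} · τ^{−n}. Then there exists N ∈ ℕ such that for all n ≥ N, h⁰_θ(L_n) ≤ 2 · 3^{C₃ e^{A₃√n}} · exp(−π C² e^{−2A√n} τ^{−2n}). -/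
set_option maxHeartbeats 1000000

open Real MeasureTheory Metric Set

private lemma pack_euclid (d : ℕ) (hd : 0 < d) (s : Finset (EuclideanSpace ℝ (Fin d))) {m R : ℝ}
    (hm : 0 < m) (hR : 0 < R)
    (hsep : ∀ x ∈ s, ∀ y ∈ s, x ≠ y → m ≤ ‖x - y‖)
    (hRs : ∀ x ∈ s, ‖x‖ ≤ R) :
    (s.card : ℝ) ≤ (1 + 2 * R / m) ^ d := by
  have : Nonempty (Fin d) := Fin.pos_iff_nonempty.mp hd
  have hdis : (s : Set (EuclideanSpace ℝ (Fin d))).PairwiseDisjoint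
      (fun x => ball x (m / 2)) := by
    intro x hx y hy hxy
    apply ball_disjoint_ball
    rw [dist_eq_norm]
    calc m / 2 + m / 2 = m := by ring
    _ ≤ ‖x - y‖ := hsep x hx y hy hxy
  have hsub : ∀ x ∈ s, ball x (m / 2) ⊆ ball (0 : EuclideanSpace ℝ (Fin d)) (R + m / 2) := by
    intro x hx z hz
    rw [mem_ball, dist_zero_right]
    calc ‖z‖ = ‖(z - x) + x‖ := by rw [sub_add_cancel]
    _ ≤ ‖z - x‖ + ‖x‖ := norm_add_le _ _
    _ < m / 2 + R := by
        rw [mem_ball, dist_eq_norm] at hz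
        exact add_lt_add_of_lt_of_le hz (hRs x hx)
    _ = R + m / 2 := by ring
  have hmeas := measure_biUnion_finset (μ := volume) hdis (fun x _ => measurableSet_ball)
  have hunion : volume (⋃ x ∈ s, ball x (m / 2)) ≤
      volume (ball (0 : EuclideanSpace ℝ (Fin d)) (R + m / 2)) :=
    measure_mono (Set.iUnion₂_subset hsub)
  rw [hmeas] at hunion
  have hball : ∀ x : EuclideanSpace ℝ (Fin d), volume (ball x (m/2)) =
      ENNReal.ofReal ((m/2) ^ d) * volume (ball (0 : EuclideanSpace ℝ (Fin d)) 1) := by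
    intro x
    rw [Measure.addHaar_ball volume x (by linarith : (0:ℝ) ≤ m/2),
      finrank_euclideanSpace, Fintype.card_fin]
  rw [Finset.sum_congr rfl (fun x hx => hball x), Finset.sum_const, nsmul_eq_mul,
    Measure.addHaar_ball volume 0 (by linarith : (0:ℝ) ≤ R + m/2),
    finrank_euclideanSpace, Fintype.card_fin, ← mul_assoc] at hunion
  have hV0 : volume (ball (0 : EuclideanSpace ℝ (Fin d)) 1) ≠ 0 :=
    (measure_ball_pos _ _ one_pos).ne'
  have hVtop : volume (ball (0 : EuclideanSpace ℝ (Fin d)) 1) ≠ ⊤ := measure_ball_lt_top.ne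
  have h2 : (s.card : ENNReal) * ENNReal.ofReal ((m/2) ^ d) ≤ ENNReal.ofReal ((R + m/2) ^ d) :=
    (ENNReal.mul_le_mul_iff_left hV0 hVtop).mp hunion
  have hmd : (0:ℝ) < (m/2) ^ d := pow_pos (by linarith) d
  have h3 : (s.card : ℝ) * (m/2) ^ d ≤ (R + m/2) ^ d := by
    rw [← ENNReal.ofReal_natCast, ← ENNReal.ofReal_mul (Nat.cast_nonneg _)] at h2
    exact (ENNReal.ofReal_le_ofReal_iff (by positivity)).mp h2
  calc (s.card : ℝ) = ((s.card : ℝ) * (m/2)^d) / (m/2)^d := by field_simp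
  _ ≤ (R + m/2)^d / (m/2)^d := by gcongr
  _ = (1 + 2 * R / m) ^ d := by
      rw [← div_pow]
      congr 1
      field_simp
      ring

private lemma pack {E : Type*} [NormedAddCommGroup E] [InnerProductSpace ℝ E]
    [FiniteDimensional ℝ E]
    (hd : 0 < Module.finrank ℝ E) (s : Finset E) {m R : ℝ}
    (hm : 0 < m) (hR : 0 < R)
    (hsep : ∀ x ∈ s, ∀ y ∈ s, x ≠ y → m ≤ ‖x - y‖)
    (hRs : ∀ x ∈ s, ‖x‖ ≤ R) :
    (s.card : ℝ) ≤ (1 + 2 * R / m) ^ (Module.finrank ℝ E) := by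
  classical
  set d := Module.finrank ℝ E with hdd
  let e : E ≃ₗᵢ[ℝ] EuclideanSpace ℝ (Fin d) := (stdOrthonormalBasis ℝ E).repr
  have hinj : Function.Injective e := e.injective
  have hcard : (s.image (fun x => e x)).card = s.card :=
    Finset.card_image_of_injective s hinj
  have := pack_euclid d hd (s.image (fun x => e x)) hm hR ?_ ?_
  · rwa [hcard] at this
  · intro x hx y hy hxy
    obtain ⟨a, ha, rfl⟩ := Finset.mem_image.mp hx
    obtain ⟨b, hb, rfl⟩ := Finset.mem_image.mp hy
    have hab : a ≠ b := fun h => hxy (by rw [h])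
    calc m ≤ ‖a - b‖ := hsep a ha b hb hab
    _ = ‖e (a - b)‖ := (e.norm_map _).symm
    _ = ‖e a - e b‖ := by rw [map_sub]
  · intro x hx
    obtain ⟨a, ha, rfl⟩ := Finset.mem_image.mp hx
    rw [e.norm_map]
    exact hRs a ha

private lemma exp29 : Real.exp (2/9) ≤ 1.3 := by
  have h1 : Real.exp (2/9) ≤ Real.exp (1/4) := Real.exp_le_exp.2 (by norm_num)
  have h2 : Real.exp (1/4) ^ 4 = Real.exp 1 := by
    rw [← Real.exp_nat_mul]
    norm_num
  have h3 : Real.exp (1/4) ^ 4 < (1.3:ℝ) ^ 4 := by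
    rw [h2]
    calc Real.exp 1 < 2.7182818286 := Real.exp_one_lt_d9
    _ ≤ (1.3:ℝ)^4 := by norm_num
  have := lt_of_pow_lt_pow_left₀ 4 (by norm_num : (0:ℝ) ≤ 1.3) h3
  linarith

private lemma exp_ge_27 : (2.7:ℝ) ≤ Real.exp 1 := le_of_lt (by
  calc (2.7:ℝ) < 2.7182818283 := by norm_num
  _ < Real.exp 1 := Real.exp_one_gt_d9)

private lemma exp_neg3 : Real.exp (-3) ≤ (1/8:ℝ) := by
  have h8 : (8:ℝ) ≤ Real.exp 3 := by
    calc (8:ℝ) ≤ 2.7^3 := by norm_num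
    _ ≤ (Real.exp 1)^3 := pow_le_pow_left₀ (by norm_num) exp_ge_27 3
    _ = Real.exp 3 := by rw [← Real.exp_nat_mul]; norm_num
  rw [Real.exp_neg]
  rw [inv_le_comm₀ (Real.exp_pos _) (by norm_num)]
  calc (1/8:ℝ)⁻¹ = 8 := by norm_num
  _ ≤ Real.exp 3 := h8

/-- Main per-lattice estimate. -/
private lemma theta_single {E : Type*} [NormedAddCommGroup E] [InnerProductSpace ℝ E]
    [FiniteDimensional ℝ E] (L : Submodule ℤ E)
    {m Rb : ℝ} (hm4 : 4 * Rb ≤ m)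
    (hRb : (Module.finrank ℝ E : ℝ) ≤ Rb)
    (hr1 : 1 ≤ Module.finrank ℝ E)
    (hmin' : ∀ w : E, w ∈ L → w ≠ 0 → m ≤ ‖w‖) :
    Real.log (∑' v : L, Real.exp (-π * ‖(v : E)‖ ^ 2)) ≤
      2 * (3:ℝ) ^ Rb * Real.exp (-π * m ^ 2) := by
  classical
  set r := Module.finrank ℝ E with hrdef
  have hr0 : 0 < r := hr1
  have hrR : (1:ℝ) ≤ (r:ℝ) := by exact_mod_cast hr1
  have hRb1 : (1:ℝ) ≤ Rb := le_trans hrR hRb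
  have hm : (0:ℝ) < m := by linarith
  have hm4r : 4 * (r:ℝ) ≤ m := by nlinarith
  have hm2 : 16 * (r:ℝ)^2 ≤ m^2 := by nlinarith
  have hm16r : 16 * (r:ℝ) ≤ m^2 := by nlinarith
  set ε : ℝ := 1 / (3 * (r:ℝ)) with hεdef
  have hε0 : 0 < ε := by positivity
  have hε3 : ε ≤ 1/3 := by
    rw [hεdef]
    rw [div_le_div_iff₀ (by positivity) (by norm_num)]
    nlinarith
  set B : ℝ := Real.exp (-π * m^2) with hBdef
  have hB0 : 0 < B := Real.exp_pos _
  set f : L → ℝ := fun v => Real.exp (-π * ‖(v : E)‖ ^ 2) with hfdef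
  have hf0 : ∀ v, 0 ≤ f v := fun v => (Real.exp_pos _).le
  -- term bound from norm lower bound
  have hterm : ∀ (v : L) (c : ℝ), 0 ≤ c → c ≤ ‖(v:E)‖ → f v ≤ Real.exp (-π * c^2) := by
    intro v c hc hcv
    apply Real.exp_le_exp.2
    have : c^2 ≤ ‖(v:E)‖^2 := by nlinarith [norm_nonneg (v:E)]
    nlinarith [Real.pi_pos]
  -- packing for finsets of lattice points
  have hpackL : ∀ (t : Finset L) (R : ℝ), 0 < R → (∀ v ∈ t, ‖(v:E)‖ ≤ R) →
      (t.card : ℝ) ≤ (1 + 2 * R / m) ^ r := by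
    intro t R hR hnor
    have hcard : (t.image (Subtype.val : L → E)).card = t.card :=
      Finset.card_image_of_injective t Subtype.coe_injective
    rw [← hcard]
    apply pack hr0 _ hm hR
    · intro x hx y hy hxy
      obtain ⟨a, ha, rfl⟩ := Finset.mem_image.mp hx
      obtain ⟨b, hb, rfl⟩ := Finset.mem_image.mp hy
      apply hmin' _ (Submodule.sub_mem _ a.2 b.2)
      exact sub_ne_zero.mpr hxy
    · intro x hx
      obtain ⟨a, ha, rfl⟩ := Finset.mem_image.mp hx
      exact hnor a ha
  -- the key finite-sum bound
  have hkey : ∀ u : Finset L, ∑ v ∈ u, f v ≤ 1 + 2 * (3:ℝ)^(r:ℕ) * B := by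
    intro u
    set P : L → Prop := fun v => ‖(v:E)‖ ≤ (1+ε)*m with hPdef
    set Q : L → Prop := fun v => ‖(v:E)‖ ≤ 2*m with hQdef
    set Z : L → Prop := fun v => (v:E) = 0 with hZdef
    -- zero part
    have hsplit0 : ∑ v ∈ u, f v =
        ∑ v ∈ u.filter Z, f v + ∑ v ∈ u.filter (fun v => ¬ Z v), f v :=
      (Finset.sum_filter_add_sum_filter_not u Z f).symm
    have hzero : ∑ v ∈ u.filter Z, f v ≤ 1 := by
      have hsub : u.filter Z ⊆ {(0 : L)} := by
        intro v hv
        rw [Finset.mem_filter] at hv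
        rw [Finset.mem_singleton]
        exact Subtype.coe_injective hv.2
      calc ∑ v ∈ u.filter Z, f v ≤ ∑ v ∈ ({(0:L)} : Finset L), f v :=
        Finset.sum_le_sum_of_subset_of_nonneg hsub (fun v _ _ => hf0 v)
      _ = f 0 := Finset.sum_singleton _ _
      _ = 1 := by simp [hfdef]
    set u1 := u.filter (fun v => ¬ Z v) with hu1def
    have hu1ne : ∀ v ∈ u1, (v:E) ≠ 0 := by
      intro v hv; exact (Finset.mem_filter.mp hv).2
    -- nonzero elements have norm ≥ m
    have hnm : ∀ v ∈ u1, m ≤ ‖(v:E)‖ := fun v hv => hmin' _ v.2 (hu1ne v hv)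
    -- split u1 into a, b, c
    have hsplit1 : ∑ v ∈ u1, f v =
        ∑ v ∈ u1.filter P, f v + ∑ v ∈ u1.filter (fun v => ¬ P v), f v :=
      (Finset.sum_filter_add_sum_filter_not u1 P f).symm
    set u2 := u1.filter (fun v => ¬ P v) with hu2def
    have hsplit2 : ∑ v ∈ u2, f v =
        ∑ v ∈ u2.filter Q, f v + ∑ v ∈ u2.filter (fun v => ¬ Q v), f v :=
      (Finset.sum_filter_add_sum_filter_not u2 Q f).symm
    set a := u1.filter P with hadef
    set b := u2.filter Q with hbdef
    set c := u2.filter (fun v => ¬ Q v) with hcdef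
    -- bound on a
    have hacard : (a.card : ℝ) ≤ (3 + 2*ε) ^ r := by
      have := hpackL a ((1+ε)*m) (by positivity)
        (fun v hv => (Finset.mem_filter.mp hv).2)
      convert this using 2
      field_simp
      ring
    have ha : ∑ v ∈ a, f v ≤ (3 + 2*ε)^r * B := by
      calc ∑ v ∈ a, f v ≤ a.card • B := by
            refine Finset.sum_le_card_nsmul a f B ?_
            intro v hv
            exact hterm v m hm.le (hnm v (Finset.mem_filter.mp hv).1)
      _ = (a.card : ℝ) * B := nsmul_eq_mul _ _
      _ ≤ (3 + 2*ε)^r * B := by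
          apply mul_le_mul_of_nonneg_right hacard hB0.le
    -- bound on b
    have hbcard : (b.card : ℝ) ≤ 5 ^ r := by
      have := hpackL b (2*m) (by positivity)
        (fun v hv => (Finset.mem_filter.mp hv).2)
      convert this using 2
      field_simp
      ring
    have hb : ∑ v ∈ b, f v ≤ 5^r * Real.exp (-π * ((1+ε)*m)^2) := by
      calc ∑ v ∈ b, f v ≤ b.card • Real.exp (-π * ((1+ε)*m)^2) := by
            refine Finset.sum_le_card_nsmul b f _ ?_
            intro v hv
            apply hterm v ((1+ε)*m) (by positivity)
            have hv2 := (Finset.mem_filter.mp (Finset.mem_filter.mp hv).1).2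
            simp only [hPdef] at hv2
            linarith [not_le.mp hv2]
      _ = (b.card : ℝ) * Real.exp (-π * ((1+ε)*m)^2) := nsmul_eq_mul _ _
      _ ≤ 5^r * Real.exp (-π * ((1+ε)*m)^2) :=
          mul_le_mul_of_nonneg_right hbcard (Real.exp_pos _).le
    -- bound on c via shells
    set g : L → ℕ := fun v => ⌊‖(v:E)‖ / m⌋₊ with hgdef
    set K := c.sup g with hKdef
    have hmaps : ∀ v ∈ c, g v ∈ Finset.Icc 2 K := by
      intro v hv
      rw [Finset.mem_Icc]
      constructor
      · apply Nat.le_floor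
        have hv2 : ¬ ‖(v:E)‖ ≤ 2*m := (Finset.mem_filter.mp hv).2
        rw [le_div_iff₀ hm]
        push_cast
        linarith [not_le.mp hv2]
      · exact Finset.le_sup hv
    have hcsum : ∑ v ∈ c, f v = ∑ k ∈ Finset.Icc 2 K, ∑ v ∈ c.filter (fun v => g v = k), f v :=
      (Finset.sum_fiberwise_of_maps_to hmaps f).symm
    have hshell : ∀ k ∈ Finset.Icc 2 K,
        ∑ v ∈ c.filter (fun v => g v = k), f v ≤ (2*(k:ℝ)+3)^r * Real.exp (-π * ((k:ℝ)*m)^2) := by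
      intro k hk
      have hk2 : 2 ≤ k := (Finset.mem_Icc.mp hk).1
      have hklb : ∀ v ∈ c.filter (fun v => g v = k), (k:ℝ)*m ≤ ‖(v:E)‖ := by
        intro v hv
        have hgv : ⌊‖(v:E)‖ / m⌋₊ = k := (Finset.mem_filter.mp hv).2
        have hfl : ((k:ℕ):ℝ) ≤ ‖(v:E)‖ / m := by
          rw [← hgv]
          exact Nat.floor_le (by positivity : (0:ℝ) ≤ ‖(v:E)‖ / m)
        calc (k:ℝ)*m ≤ (‖(v:E)‖/m) * m := mul_le_mul_of_nonneg_right hfl hm.le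
        _ = ‖(v:E)‖ := by field_simp
      have hkub : ∀ v ∈ c.filter (fun v => g v = k), ‖(v:E)‖ ≤ ((k:ℝ)+1)*m := by
        intro v hv
        have hgv : ⌊‖(v:E)‖ / m⌋₊ = k := (Finset.mem_filter.mp hv).2
        have hfl : ‖(v:E)‖ / m < (k:ℝ) + 1 := by
          rw [← hgv]
          exact_mod_cast Nat.lt_floor_add_one (‖(v:E)‖ / m)
        have := (div_lt_iff₀ hm).mp hfl
        linarith
      have hccard : ((c.filter (fun v => g v = k)).card : ℝ) ≤ (2*(k:ℝ)+3) ^ r := by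
        have := hpackL (c.filter (fun v => g v = k)) (((k:ℝ)+1)*m) (by positivity) hkub
        convert this using 2
        field_simp
        ring
      calc ∑ v ∈ c.filter (fun v => g v = k), f v
          ≤ (c.filter (fun v => g v = k)).card • Real.exp (-π * ((k:ℝ)*m)^2) := by
            refine Finset.sum_le_card_nsmul _ f _ ?_
            intro v hv
            exact hterm v ((k:ℝ)*m) (by positivity) (hklb v hv)
      _ = ((c.filter (fun v => g v = k)).card : ℝ) * Real.exp (-π * ((k:ℝ)*m)^2) :=
          nsmul_eq_mul _ _
      _ ≤ (2*(k:ℝ)+3)^r * Real.exp (-π * ((k:ℝ)*m)^2) :=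
          mul_le_mul_of_nonneg_right hccard (Real.exp_pos _).le
    -- numeric shell bound
    have hnum : ∀ k : ℕ, 2 ≤ k →
        (2*(k:ℝ)+3)^r * Real.exp (-π * ((k:ℝ)*m)^2) ≤ (1/8:ℝ)^(k+1) * B := by
      intro k hk2
      have hkR : (2:ℝ) ≤ (k:ℝ) := by exact_mod_cast hk2
      have h1 : (2*(k:ℝ)+3) ≤ Real.exp ((k:ℝ)+1) := by
        have hexpk : (k:ℝ) + 1 ≤ Real.exp (k:ℝ) := by
          linarith [Real.add_one_le_exp (k:ℝ)]
        calc 2*(k:ℝ)+3 ≤ 2.7 * ((k:ℝ)+1) := by linarith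
        _ ≤ Real.exp 1 * Real.exp (k:ℝ) :=
            mul_le_mul exp_ge_27 hexpk (by positivity) (Real.exp_pos _).le
        _ = Real.exp ((k:ℝ)+1) := by rw [← Real.exp_add]; ring_nf
      have h2 : (2*(k:ℝ)+3)^r ≤ Real.exp ((r:ℝ)*((k:ℝ)+1)) := by
        calc (2*(k:ℝ)+3)^r ≤ (Real.exp ((k:ℝ)+1))^r :=
          pow_le_pow_left₀ (by positivity) h1 r
        _ = Real.exp ((r:ℝ)*((k:ℝ)+1)) := (Real.exp_nat_mul _ r).symm
      have h3 : Real.exp (-3*((k:ℝ)+1)) ≤ (1/8:ℝ)^(k+1) := by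
        have he3 : Real.exp (-3) ≤ (1/8:ℝ) := exp_neg3
        have e1 : Real.exp (-3*((k:ℝ)+1)) = (Real.exp (-3))^(k+1) := by
          rw [← Real.exp_nat_mul]
          congr 1
          push_cast
          ring
        rw [e1]
        exact pow_le_pow_left₀ (Real.exp_pos _).le he3 _
      have hπ3 : (3:ℝ) ≤ π := Real.pi_gt_three.le
      have hm2nn : (0:ℝ) ≤ m^2 := sq_nonneg m
      have hmain : (r:ℝ)*((k:ℝ)+1) - π*((k:ℝ)*m)^2 ≤ -3*((k:ℝ)+1) + (-π * m^2) := by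
        have e1 : π*((k:ℝ)*m)^2 - π*m^2 = π*((k:ℝ)^2-1)*m^2 := by ring
        have e5 : ((k:ℝ)+1)*m^2 ≤ ((k:ℝ)^2-1)*m^2 := by
          nlinarith [mul_nonneg (mul_nonneg (by linarith : (0:ℝ) ≤ (k:ℝ)-2)
            (by linarith : (0:ℝ) ≤ (k:ℝ)+1)) hm2nn]
        have e4 : 3*(((k:ℝ)+1)*m^2) ≤ π*((k:ℝ)^2-1)*m^2 := by
          calc 3*(((k:ℝ)+1)*m^2) ≤ 3*(((k:ℝ)^2-1)*m^2) := by linarith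
          _ ≤ π*(((k:ℝ)^2-1)*m^2) := by
              apply mul_le_mul_of_nonneg_right hπ3
              have hk1 : (0:ℝ) ≤ ((k:ℝ)^2-1) := by nlinarith
              exact mul_nonneg hk1 hm2nn
          _ = π*((k:ℝ)^2-1)*m^2 := by ring
        have hkm : 48*((r:ℝ)*((k:ℝ)+1)) ≤ 3*(((k:ℝ)+1)*m^2) := by
          have h0 : (0:ℝ) ≤ 3*((k:ℝ)+1) := by linarith
          calc 48*((r:ℝ)*((k:ℝ)+1)) = (3*((k:ℝ)+1)) * (16*(r:ℝ)) := by ring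
          _ ≤ (3*((k:ℝ)+1)) * m^2 := mul_le_mul_of_nonneg_left hm16r h0
          _ = 3*(((k:ℝ)+1)*m^2) := by ring
        have hr_k : ((k:ℝ)+1) ≤ (r:ℝ)*((k:ℝ)+1) := by
          nlinarith [mul_nonneg (by linarith : (0:ℝ) ≤ (r:ℝ)-1)
            (by linarith : (0:ℝ) ≤ (k:ℝ)+1)]
        linarith [e1, e4, hkm, hr_k, hkR]
      calc (2*(k:ℝ)+3)^r * Real.exp (-π * ((k:ℝ)*m)^2)
          ≤ Real.exp ((r:ℝ)*((k:ℝ)+1)) * Real.exp (-π * ((k:ℝ)*m)^2) :=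
        mul_le_mul_of_nonneg_right h2 (Real.exp_pos _).le
      _ = Real.exp ((r:ℝ)*((k:ℝ)+1) - π*((k:ℝ)*m)^2) := by
          rw [← Real.exp_add]; ring_nf
      _ ≤ Real.exp (-3*((k:ℝ)+1) + (-π * m^2)) := Real.exp_le_exp.2 hmain
      _ = Real.exp (-3*((k:ℝ)+1)) * B := by rw [Real.exp_add]
      _ ≤ (1/8:ℝ)^(k+1) * B := mul_le_mul_of_nonneg_right h3 hB0.le
    have hgeom : ∑ k ∈ Finset.Icc 2 K, (1/8:ℝ)^(k+1) ≤ 1/7 := by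
      calc ∑ k ∈ Finset.Icc 2 K, (1/8:ℝ)^(k+1)
          ≤ ∑ k ∈ Finset.range (K+1), (1/8:ℝ)^(k+1) := by
              apply Finset.sum_le_sum_of_subset_of_nonneg
              · intro k hk
                rw [Finset.mem_range]
                have := (Finset.mem_Icc.mp hk).2
                omega
              · intro k _ _
                positivity
      _ = (1/8:ℝ) * ∑ k ∈ Finset.range (K+1), (1/8:ℝ)^k := by
          rw [Finset.mul_sum]
          apply Finset.sum_congr rfl
          intro k _
          ring
      _ ≤ (1/8:ℝ) * (8/7) := by
          apply mul_le_mul_of_nonneg_left _ (by norm_num)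
          rw [geom_sum_eq (by norm_num : (1/8:ℝ) ≠ 1)]
          rw [div_le_iff_of_neg (by norm_num : (1/8:ℝ) - 1 < 0)]
          have : (0:ℝ) ≤ (1/8:ℝ)^(K+1) := by positivity
          linarith
      _ = 1/7 := by norm_num
    have hc : ∑ v ∈ c, f v ≤ (1/7:ℝ) * B := by
      rw [hcsum]
      calc ∑ k ∈ Finset.Icc 2 K, ∑ v ∈ c.filter (fun v => g v = k), f v
          ≤ ∑ k ∈ Finset.Icc 2 K, (1/8:ℝ)^(k+1) * B := by
              apply Finset.sum_le_sum
              intro k hk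
              exact le_trans (hshell k hk) (hnum k (Finset.mem_Icc.mp hk).1)
      _ = (∑ k ∈ Finset.Icc 2 K, (1/8:ℝ)^(k+1)) * B := by rw [Finset.sum_mul]
      _ ≤ (1/7:ℝ) * B := mul_le_mul_of_nonneg_right hgeom hB0.le
    -- numeric: (3+2ε)^r ≤ exp(2/9)·3^r
    have hN2 : (3+2*ε)^r ≤ Real.exp (2/9) * 3^r := by
      have e1 : (3+2*ε) = 3 * (1 + 2/(9*(r:ℝ))) := by
        rw [hεdef]; field_simp; ring
      rw [e1, mul_pow]
      rw [mul_comm (Real.exp (2/9)) ((3:ℝ)^r)]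
      apply mul_le_mul_of_nonneg_left _ (by positivity)
      calc (1 + 2/(9*(r:ℝ)))^r ≤ (Real.exp (2/(9*(r:ℝ))))^r := by
              apply pow_le_pow_left₀ (by positivity)
              linarith [Real.add_one_le_exp (2/(9*(r:ℝ)))]
      _ = Real.exp ((r:ℝ) * (2/(9*(r:ℝ)))) := (Real.exp_nat_mul _ r).symm
      _ = Real.exp (2/9) := by
          congr 1
          field_simp
    -- numeric: 5^r exp(-π(1+ε)²m²) ≤ (1/8) B
    have hN3 : (5:ℝ)^r * Real.exp (-π * ((1+ε)*m)^2) ≤ (1/8:ℝ) * B := by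
      have h5 : (5:ℝ) ≤ Real.exp 2 := by
        have : Real.exp 2 = Real.exp 1 * Real.exp 1 := by rw [← Real.exp_add]; norm_num
        nlinarith [exp_ge_27]
      have h5r : (5:ℝ)^r ≤ Real.exp (2*(r:ℝ)) := by
        calc (5:ℝ)^r ≤ (Real.exp 2)^r := pow_le_pow_left₀ (by norm_num) h5 r
        _ = Real.exp ((r:ℝ)*2) := (Real.exp_nat_mul _ r).symm
        _ = Real.exp (2*(r:ℝ)) := by ring_nf
      have h8 : Real.exp (-3) ≤ (1/8:ℝ) := exp_neg3
      have hπ3 : (3:ℝ) ≤ π := Real.pi_gt_three.le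
      have hrne : (r:ℝ) ≠ 0 := by linarith
      have hπ3 : (3:ℝ) ≤ π := Real.pi_gt_three.le
      have hεm2 : 16*(r:ℝ)/3 ≤ ε * m^2 := by
        have h' : (1/(3*(r:ℝ))) * (16*(r:ℝ)^2) ≤ ε * m^2 := by
          rw [hεdef]
          exact mul_le_mul_of_nonneg_left hm2 (by positivity)
        have e2 : (1/(3*(r:ℝ))) * (16*(r:ℝ)^2) = 16*(r:ℝ)/3 := by
          field_simp
        linarith
      have hεm : 32 * (r:ℝ) ≤ 2 * π * ε * m^2 := by
        calc 32*(r:ℝ) = 6*(16*(r:ℝ)/3) := by ring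
        _ ≤ 6*(ε*m^2) := by linarith
        _ ≤ (2*π)*(ε*m^2) := by
            apply mul_le_mul_of_nonneg_right (by linarith) (by linarith)
        _ = 2*π*ε*m^2 := by ring
      have hmain : 2*(r:ℝ) - π*((1+ε)*m)^2 ≤ -3 + (-π * m^2) := by
        have e1 : π*((1+ε)*m)^2 - π*m^2 = 2*π*ε*m^2 + π*ε^2*m^2 := by ring
        have e2 : (0:ℝ) ≤ π*ε^2*m^2 := by positivity
        linarith
      calc (5:ℝ)^r * Real.exp (-π * ((1+ε)*m)^2)
          ≤ Real.exp (2*(r:ℝ)) * Real.exp (-π * ((1+ε)*m)^2) :=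
        mul_le_mul_of_nonneg_right h5r (Real.exp_pos _).le
      _ = Real.exp (2*(r:ℝ) - π*((1+ε)*m)^2) := by rw [← Real.exp_add]; ring_nf
      _ ≤ Real.exp (-3 + (-π*m^2)) := Real.exp_le_exp.2 hmain
      _ = Real.exp (-3) * B := by rw [Real.exp_add]
      _ ≤ (1/8:ℝ) * B := mul_le_mul_of_nonneg_right h8 hB0.le
    -- assemble
    have h3r1 : (1:ℝ) ≤ 3^r := one_le_pow₀ (by norm_num)
    have hu1bound : ∑ v ∈ u1, f v ≤ 2 * (3:ℝ)^(r:ℕ) * B := by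
      rw [hsplit1, hsplit2]
      have hstep : (3+2*ε)^r ≤ 1.3 * 3^r :=
        le_trans hN2 (mul_le_mul_of_nonneg_right exp29 (by positivity))
      have hstep2 : (3+2*ε)^r * B ≤ 1.3 * ((3:ℝ)^r * B) := by
        have := mul_le_mul_of_nonneg_right hstep hB0.le
        linarith [this]
      have hB3 : B ≤ (3:ℝ)^r * B := by nlinarith [h3r1, hB0.le]
      have : (3+2*ε)^r * B + ((1/8:ℝ)*B + (1/7:ℝ)*B) ≤ 2 * (3:ℝ)^r * B := by
        linarith
      calc ∑ v ∈ a, f v + (∑ v ∈ b, f v + ∑ v ∈ c, f v)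
          ≤ (3+2*ε)^r * B + ((1/8:ℝ)*B + (1/7:ℝ)*B) := by
              apply add_le_add ha
              apply add_le_add (le_trans hb hN3) hc
      _ ≤ 2 * (3:ℝ)^r * B := this
    rw [hsplit0]
    exact add_le_add hzero hu1bound
  -- summability and conclusion
  have hsummable : Summable f :=
    summable_of_sum_le (fun v => hf0 v) hkey
  have htsum : ∑' v : L, f v ≤ 1 + 2 * (3:ℝ)^(r:ℕ) * B :=
    Summable.tsum_le_of_sum_le hsummable hkey
  have htpos : 1 ≤ ∑' v : L, f v := by
    have := Summable.le_tsum hsummable 0 (fun v _ => hf0 v)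
    calc (1:ℝ) = f 0 := by simp [hfdef]
    _ ≤ ∑' v : L, f v := this
  have hlog : Real.log (∑' v : L, f v) ≤ 2 * (3:ℝ)^(r:ℕ) * B := by
    calc Real.log (∑' v : L, f v) ≤ (∑' v : L, f v) - 1 :=
      Real.log_le_sub_one_of_pos (by linarith)
    _ ≤ 2 * (3:ℝ)^(r:ℕ) * B := by linarith
  have hmono : 2 * (3:ℝ)^(r:ℕ) * B ≤ 2 * (3:ℝ)^Rb * B := by
    apply mul_le_mul_of_nonneg_right _ hB0.le
    have heq : ((3:ℝ)^(r:ℕ)) = (3:ℝ)^((r:ℕ):ℝ) := (Real.rpow_natCast 3 r).symm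
    rw [heq]
    apply mul_le_mul_of_nonneg_left _ (by norm_num)
    exact Real.rpow_le_rpow_of_exponent_le (by norm_num) hRb
  exact le_trans hlog hmono

/-- If a sequence of nonzero ℤ-lattices `L n` satisfies `rank(L n) ≤ C₃ e^{A₃ √n}` and
`λ₁(L n) ≥ C e^{-A √n} τ^{-n}` with `0 < τ < 1`, then eventually
`h⁰_θ(L n) ≤ 2 · 3^{C₃ e^{A₃√n}} · exp(-π C² e^{-2A√n} τ^{-2n})`. -/
theorem theta_eventually_bounded (E : ℕ → Type*) [∀ n, NormedAddCommGroup (E n)]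
    [∀ n, InnerProductSpace ℝ (E n)] [∀ n, FiniteDimensional ℝ (E n)]
    (L : ∀ n, Submodule ℤ (E n)) [∀ n, DiscreteTopology (L n)] [∀ n, IsZLattice ℝ (L n)]
    (hL : ∀ n, L n ≠ ⊥)
    (C C₃ A A₃ : ℝ) (hC : 0 < C) (hC₃ : 0 < C₃) (hA : 0 < A) (hA₃ : 0 < A₃)
    (τ : ℝ) (hτ0 : 0 < τ) (hτ1 : τ < 1)
    (hrank : ∀ n : ℕ, (Module.finrank ℝ (E n) : ℝ) ≤ C₃ * Real.exp (A₃ * Real.sqrt n))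
    (hmin : ∀ n : ℕ, C * Real.exp (-A * Real.sqrt n) * (1 / τ) ^ n ≤
      sInf ((fun v : E n => ‖v‖) '' {v : E n | v ∈ L n ∧ v ≠ 0})) :
    ∃ N : ℕ, ∀ n : ℕ, N ≤ n →
      Real.log (∑' v : L n, Real.exp (-π * ‖(v : E n)‖ ^ 2)) ≤
        2 * (3 : ℝ) ^ (C₃ * Real.exp (A₃ * Real.sqrt n)) *
          Real.exp (-π * C ^ 2 * Real.exp (-2 * A * Real.sqrt n) * (1 / τ) ^ (2 * n)) := by
  have hτinv : 1 < 1/τ := one_lt_one_div hτ0 hτ1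
  set l : ℝ := Real.log (1/τ) with hldef
  have hl : 0 < l := Real.log_pos hτinv
  set D : ℝ := Real.log (4*C₃) - Real.log C with hDdef
  set K : ℝ := max ((|D| + (A+A₃))/l) 1 with hKdef
  have hK1 : 1 ≤ K := le_max_right _ _
  have hK0 : 0 ≤ K := by linarith
  refine ⟨⌈K^2⌉₊, fun n hn => ?_⟩
  -- basic facts about √n
  have hsq : K ≤ Real.sqrt n := by
    have h1 : K^2 ≤ (n:ℝ) := by
      calc K^2 ≤ (⌈K^2⌉₊ : ℝ) := Nat.le_ceil _
      _ ≤ (n:ℝ) := by exact_mod_cast hn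
    calc K = Real.sqrt (K^2) := (Real.sqrt_sq hK0).symm
    _ ≤ Real.sqrt n := Real.sqrt_le_sqrt h1
  have hs1 : 1 ≤ Real.sqrt n := le_trans hK1 hsq
  have hnn : Real.sqrt n * Real.sqrt n = (n:ℝ) := Real.mul_self_sqrt (Nat.cast_nonneg n)
  -- exponent inequality
  have hKl : |D| + (A+A₃) ≤ K*l := by
    have h1 : (|D| + (A+A₃))/l ≤ K := le_max_left _ _
    calc |D| + (A+A₃) = ((|D| + (A+A₃))/l) * l := by field_simp
    _ ≤ K * l := mul_le_mul_of_nonneg_right h1 hl.le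
  have hexp : D + (A+A₃) * Real.sqrt n ≤ (n:ℝ) * l := by
    have h2 : D + (A+A₃) * Real.sqrt n ≤ (|D| + (A+A₃)) * Real.sqrt n := by
      have := abs_nonneg D
      have := le_abs_self D
      nlinarith
    have h3 : (|D| + (A+A₃)) * Real.sqrt n ≤ (K*l) * Real.sqrt n :=
      mul_le_mul_of_nonneg_right hKl (by linarith)
    have h4 : (K*l) * Real.sqrt n ≤ (Real.sqrt n * l) * Real.sqrt n := by
      have : K * l ≤ Real.sqrt n * l := mul_le_mul_of_nonneg_right hsq hl.le
      exact mul_le_mul_of_nonneg_right this (by linarith)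
    have h5 : (Real.sqrt n * l) * Real.sqrt n = (n:ℝ) * l := by
      rw [mul_comm (Real.sqrt n) l, mul_assoc, hnn]
      ring
    linarith
  -- the lattice minimum lower bound m
  set m : ℝ := C * Real.exp (-A * Real.sqrt n) * (1/τ)^n with hmdef
  set Rb : ℝ := C₃ * Real.exp (A₃ * Real.sqrt n) with hRbdef
  have hτn : Real.exp ((n:ℝ) * l) = (1/τ)^n := by
    rw [Real.exp_nat_mul, Real.exp_log (by positivity)]
  have hm4 : 4 * Rb ≤ m := by
    have e1 : 4 * Rb = Real.exp (Real.log (4*C₃) + A₃ * Real.sqrt n) := by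
      rw [Real.exp_add, Real.exp_log (by positivity)]
      rw [hRbdef]
      ring
    have e2 : m = Real.exp (Real.log C + (-A * Real.sqrt n) + (n:ℝ)*l) := by
      rw [Real.exp_add, Real.exp_add, Real.exp_log hC, hτn, hmdef]
    rw [e1, e2]
    apply Real.exp_le_exp.2
    rw [hDdef] at hexp
    linarith
  -- rank bounds
  have hrv := hrank n
  obtain ⟨v, hvL, hv0⟩ := Submodule.ne_bot_iff (L n) |>.mp (hL n)
  have : Nontrivial (E n) := nontrivial_of_ne v 0 hv0
  have hr1 : 1 ≤ Module.finrank ℝ (E n) := Module.finrank_pos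
  -- minimum norm bound
  have hmin' : ∀ w : E n, w ∈ L n → w ≠ 0 → m ≤ ‖w‖ := by
    intro w hw hw0
    refine le_trans (hmin n) (csInf_le ?_ ?_)
    · exact ⟨0, fun x hx => by
        obtain ⟨y, _, rfl⟩ := hx
        exact norm_nonneg y⟩
    · exact ⟨w, ⟨hw, hw0⟩, rfl⟩
  -- apply the single-lattice estimate
  have hmain := theta_single (L n) hm4 (hrank n) hr1 hmin'
  have hm2eq : -π * C ^ 2 * Real.exp (-2 * A * Real.sqrt n) * (1/τ)^(2*n) = -π * m^2 := by
    have e1 : Real.exp (-2 * A * Real.sqrt n) = (Real.exp (-A * Real.sqrt n))^2 := by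
      rw [← Real.exp_nat_mul]
      congr 1
      push_cast
      ring
    have e2 : (1/τ:ℝ)^(2*n) = ((1/τ:ℝ)^n)^2 := by
      rw [← pow_mul, mul_comm n 2]
    rw [e1, e2, hmdef]
    ring
  rw [hm2eq]
  exact hmain
end

section
/- (Analytic core of the main theta-finiteness theorem.) Let (E_n)_{n ∈ ℕ} be a sequence of finite-dimensional real inner product spaces and, for each n, let L_n ⊆ E_n be a nonzero ℤ-lattice. Suppose there exist constants C, C₃, A, A₃ > 0 and a real number τ with 0 < τ < 1 such that for all n: rank(L_n) ≤ C₃ · e^{A₃√n} and λ₁(L_n) ≥ C · e^{−A√n} · τ^{−n}. Then the series ∑_{n ≥ 0} h⁰_θ(L_n) converges, where each term h⁰_θ(L_n) = log ∑_{v ∈ L_n} exp(−π‖v‖²) is a nonnegative real number. -/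
open Real Filter MeasureTheory Metric ENNReal

private lemma packing_count {d : ℕ} (hd : 0 < d) (s : Finset (EuclideanSpace ℝ (Fin d)))
    (lam R : ℝ) (hlam : 0 < lam) (hR : 0 < R)
    (hsep : ∀ x ∈ s, ∀ y ∈ s, x ≠ y → lam ≤ dist x y)
    (hRb : ∀ x ∈ s, ‖x‖ ≤ R) :
    (s.card : ℝ) * (lam / 2) ^ d ≤ (R + lam / 2) ^ d := by
  classical
  haveI : Nontrivial (EuclideanSpace ℝ (Fin d)) :=
    Module.nontrivial_of_finrank_pos (R := ℝ) (by rw [finrank_euclideanSpace_fin]; exact hd)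
  set μ : Measure (EuclideanSpace ℝ (Fin d)) := volume with hμ
  have hdisj : (↑s : Set (EuclideanSpace ℝ (Fin d))).PairwiseDisjoint
      (fun x => ball x (lam / 2)) := by
    intro x hx y hy hxy
    exact ball_disjoint_ball (by linarith [hsep x hx y hy hxy])
  have hmeas : μ (⋃ x ∈ s, ball x (lam / 2)) = ∑ x ∈ s, μ (ball x (lam / 2)) :=
    measure_biUnion_finset hdisj fun x _ => measurableSet_ball
  have hball : ∀ x : EuclideanSpace ℝ (Fin d),
      μ (ball x (lam / 2)) = ENNReal.ofReal ((lam / 2) ^ d) * μ (ball 0 1) := by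
    intro x
    rw [Measure.addHaar_ball μ x (by positivity : (0:ℝ) ≤ lam / 2), finrank_euclideanSpace_fin]
  have hsub : (⋃ x ∈ s, ball x (lam / 2)) ⊆ ball 0 (R + lam / 2) := by
    intro z hz
    simp only [Set.mem_iUnion, exists_prop] at hz
    obtain ⟨x, hx, hzx⟩ := hz
    rw [mem_ball] at hzx ⊢
    calc dist z 0 ≤ dist z x + dist x 0 := dist_triangle _ _ _
      _ < lam / 2 + R := by
          have : dist x 0 ≤ R := by rw [dist_zero_right]; exact hRb x hx
          linarith
      _ = R + lam / 2 := by ring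
  have h1 : (s.card : ℝ≥0∞) * ENNReal.ofReal ((lam / 2) ^ d) * μ (ball 0 1) ≤
      ENNReal.ofReal ((R + lam / 2) ^ d) * μ (ball 0 1) := by
    calc (s.card : ℝ≥0∞) * ENNReal.ofReal ((lam / 2) ^ d) * μ (ball 0 1)
        = ∑ x ∈ s, μ (ball x (lam / 2)) := by
          simp only [hball, Finset.sum_const, nsmul_eq_mul, mul_assoc]
      _ = μ (⋃ x ∈ s, ball x (lam / 2)) := hmeas.symm
      _ ≤ μ (ball 0 (R + lam / 2)) := measure_mono hsub
      _ = ENNReal.ofReal ((R + lam / 2) ^ d) * μ (ball 0 1) := by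
          rw [Measure.addHaar_ball μ 0 (by positivity : (0:ℝ) ≤ R + lam / 2),
            finrank_euclideanSpace_fin]
  have hV0 : μ (ball (0 : EuclideanSpace ℝ (Fin d)) 1) ≠ 0 :=
    (measure_ball_pos μ _ one_pos).ne'
  have hVt : μ (ball (0 : EuclideanSpace ℝ (Fin d)) 1) ≠ ⊤ := measure_ball_lt_top.ne
  have h2 : (s.card : ℝ≥0∞) * ENNReal.ofReal ((lam / 2) ^ d) ≤
      ENNReal.ofReal ((R + lam / 2) ^ d) :=
    (ENNReal.mul_le_mul_iff_left hV0 hVt).1 h1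
  have h3 : ENNReal.ofReal ((s.card : ℝ) * (lam / 2) ^ d) ≤
      ENNReal.ofReal ((R + lam / 2) ^ d) := by
    rwa [ENNReal.ofReal_mul (by positivity), ENNReal.ofReal_natCast]
  exact (ENNReal.ofReal_le_ofReal_iff (by positivity)).1 h3

private lemma theta_bound {V : Type*} [NormedAddCommGroup V] [InnerProductSpace ℝ V]
    [FiniteDimensional ℝ V] (L : Submodule ℤ V) (lam : ℝ) (h2 : 2 ≤ lam)
    (hdim : 2 * (Module.finrank ℝ V : ℝ) ≤ lam ^ 2)
    (hmin : ∀ v : V, v ∈ L → v ≠ 0 → lam ≤ ‖v‖) :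
    Summable (fun v : L => Real.exp (-π * ‖(v : V)‖ ^ 2)) ∧
      ∑' v : L, Real.exp (-π * ‖(v : V)‖ ^ 2) ≤ 1 + 2 * Real.exp (-lam ^ 2) := by
  classical
  have hlam : 0 < lam := lt_of_lt_of_le two_pos h2
  set d := Module.finrank ℝ V with hdrk
  set f : L → ℝ := fun v => Real.exp (-π * ‖(v : V)‖ ^ 2) with hf
  have hfpos : ∀ v, 0 ≤ f v := fun v => (Real.exp_pos _).le
  have key : ∀ s : Finset L, ∑ v ∈ s, f v ≤ 1 + 2 * Real.exp (-lam ^ 2) := by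
    intro s
    have hsplit : ∑ v ∈ s.filter (fun v => v = 0), f v +
        ∑ v ∈ s.filter (fun v => ¬ v = 0), f v = ∑ v ∈ s, f v :=
      Finset.sum_filter_add_sum_filter_not s _ f
    have hzero : ∑ v ∈ s.filter (fun v => v = 0), f v ≤ 1 := by
      have hsub : s.filter (fun v => v = 0) ⊆ {0} := by
        intro v hv
        rcases Finset.mem_filter.1 hv with ⟨-, h⟩
        simp [h]
      calc ∑ v ∈ s.filter (fun v => v = 0), f v
          ≤ ∑ v ∈ ({0} : Finset L), f v :=
            Finset.sum_le_sum_of_subset_of_nonneg hsub (fun v _ _ => hfpos v)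
        _ = f 0 := Finset.sum_singleton _ _
        _ ≤ 1 := by simp [hf]
    set t := s.filter (fun v => ¬ v = 0) with ht
    have hnz : ∀ v ∈ t, (v : V) ≠ 0 := by
      intro v hv
      rcases Finset.mem_filter.1 hv with ⟨-, h⟩
      simpa [Submodule.coe_eq_zero] using h
    have hlow : ∀ v ∈ t, lam ≤ ‖(v : V)‖ := fun v hv => hmin v v.2 (hnz v hv)
    set sh : L → ℕ := fun v => ⌊‖(v : V)‖ / lam⌋₊ with hsh
    have hmain : ∑ v ∈ t, f v ≤ 2 * Real.exp (-lam ^ 2) := by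
      rw [← Finset.sum_fiberwise_of_maps_to
        (fun v hv => Finset.mem_image_of_mem sh hv) f]
      set K := t.image sh with hK
      have hK1 : ∀ k ∈ K, 1 ≤ k := by
        intro k hk
        obtain ⟨v, hv, rfl⟩ := Finset.mem_image.1 hk
        have h1 : (1 : ℝ) ≤ ‖(v : V)‖ / lam := (one_le_div hlam).2 (hlow v hv)
        exact Nat.le_floor (by exact_mod_cast h1)
      set r : ℝ := Real.exp (-lam ^ 2) with hr
      have hr0 : 0 ≤ r := (Real.exp_pos _).le
      have hr1 : r < 1 := Real.exp_lt_one_iff.2 (by nlinarith)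
      have hrhalf : r ≤ 1 / 2 := by
        have h4 : -lam ^ 2 ≤ -1 := by nlinarith
        have : r ≤ Real.exp (-1) := Real.exp_le_exp.2 h4
        have he : (2 : ℝ) ≤ Real.exp 1 := by
          have := Real.add_one_le_exp 1; linarith
        have : Real.exp (-1) ≤ 1 / 2 := by
          rw [Real.exp_neg]
          rw [inv_le_comm₀ (Real.exp_pos 1) (by norm_num)]
          linarith
        linarith
      have hfib : ∀ k ∈ K, ∑ v ∈ t.filter (fun v => sh v = k), f v ≤ r ^ k := by
        intro k hk
        have hk1 : 1 ≤ k := hK1 k hk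
        have hk1' : (1 : ℝ) ≤ (k : ℝ) := by exact_mod_cast hk1
        set u := t.filter (fun v => sh v = k) with hu
        have hshk : ∀ v ∈ u, sh v = k := fun v hv => (Finset.mem_filter.1 hv).2
        have hut : ∀ v ∈ u, v ∈ t := fun v hv => (Finset.mem_filter.1 hv).1
        -- each term bound
        have hterm : ∀ v ∈ u, f v ≤ Real.exp (-(3 * (k : ℝ) ^ 2 * lam ^ 2)) := by
          intro v hv
          have hkle : (k : ℝ) * lam ≤ ‖(v : V)‖ := by
            have h1 : (k : ℝ) ≤ ‖(v : V)‖ / lam := by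
              rw [← hshk v hv]
              exact Nat.floor_le (by positivity)
            calc (k : ℝ) * lam ≤ ‖(v : V)‖ / lam * lam :=
                mul_le_mul_of_nonneg_right h1 hlam.le
              _ = ‖(v : V)‖ := div_mul_cancel₀ _ hlam.ne'
          have hpi : (3 : ℝ) ≤ π := Real.pi_gt_three.le
          have hnn : 0 ≤ ‖(v : V)‖ := norm_nonneg _
          apply Real.exp_le_exp.2
          have hsq : ((k : ℝ) * lam) ^ 2 ≤ ‖(v : V)‖ ^ 2 := by
            apply pow_le_pow_left₀ (by positivity) hkle
          nlinarith [sq_nonneg ((k : ℝ) * lam)]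
        -- card bound
        have hcard : ((u.card : ℝ)) ≤ (3 * ((k : ℝ) + 1)) ^ d := by
          -- transfer to Euclidean space
          haveI : Nontrivial V := by
            obtain ⟨v, hv, rfl⟩ := Finset.mem_image.1 hk
            exact nontrivial_of_ne _ _ (hnz v hv)
          have hd0 : 0 < d := hdrk ▸ Module.finrank_pos
          set φ := (stdOrthonormalBasis ℝ V).repr with hφ
          set u' : Finset (EuclideanSpace ℝ (Fin d)) :=
            u.image (fun v : L => φ (v : V)) with hu'
          have hinj : Function.Injective (fun v : L => φ (v : V)) := by
            intro a b hab
            exact Subtype.ext (φ.injective hab)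
          have hcards : u'.card = u.card := Finset.card_image_of_injective u hinj
          have hpack := packing_count hd0 u' lam (((k : ℝ) + 1) * lam) hlam
            (by positivity)
            (by
              intro x hx y hy hxy
              obtain ⟨a, ha, rfl⟩ := Finset.mem_image.1 hx
              obtain ⟨b, hb, rfl⟩ := Finset.mem_image.1 hy
              have hab : a ≠ b := fun h => hxy (by rw [h])
              rw [φ.dist_map, dist_eq_norm]
              have hmem : ((a : V) - (b : V)) ∈ L := by
                simpa using sub_mem a.2 b.2
              have hne : (a : V) - (b : V) ≠ 0 := by
                intro h
                exact hab (Subtype.ext (by rwa [sub_eq_zero] at h))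
              exact hmin _ hmem hne)
            (by
              intro x hx
              obtain ⟨a, ha, rfl⟩ := Finset.mem_image.1 hx
              rw [φ.norm_map]
              have h1 : ‖(a : V)‖ / lam < (k : ℝ) + 1 := by
                rw [← hshk a ha]
                exact Nat.lt_floor_add_one _
              have := (div_lt_iff₀ hlam).1 h1
              linarith)
          have hhalf : (0 : ℝ) < (lam / 2) ^ d := by positivity
          have heq : (((k : ℝ) + 1) * lam + lam / 2) = (2 * (k : ℝ) + 3) * (lam / 2) := by
            ring
          rw [hcards, heq, mul_pow] at hpack
          have h5 : (u.card : ℝ) ≤ (2 * (k : ℝ) + 3) ^ d :=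
            le_of_mul_le_mul_right hpack hhalf
          calc (u.card : ℝ) ≤ (2 * (k : ℝ) + 3) ^ d := h5
            _ ≤ (3 * ((k : ℝ) + 1)) ^ d := by
                apply pow_le_pow_left₀ (by positivity)
                linarith
        calc ∑ v ∈ u, f v ≤ u.card • Real.exp (-(3 * (k : ℝ) ^ 2 * lam ^ 2)) :=
              Finset.sum_le_card_nsmul u f _ hterm
          _ = (u.card : ℝ) * Real.exp (-(3 * (k : ℝ) ^ 2 * lam ^ 2)) := by
              rw [nsmul_eq_mul]
          _ ≤ (3 * ((k : ℝ) + 1)) ^ d * Real.exp (-(3 * (k : ℝ) ^ 2 * lam ^ 2)) := by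
              apply mul_le_mul_of_nonneg_right hcard (Real.exp_pos _).le
          _ ≤ r ^ k := by
              have hbase : (3 * ((k : ℝ) + 1)) ≤ Real.exp ((k : ℝ) + 2) := by
                have h1 : (k : ℝ) + 1 ≤ Real.exp (k : ℝ) := Real.add_one_le_exp _
                have h2 : (3 : ℝ) ≤ Real.exp 2 := by
                  have := Real.add_one_le_exp 2; linarith
                calc (3 : ℝ) * ((k : ℝ) + 1) ≤ Real.exp 2 * Real.exp (k : ℝ) :=
                    mul_le_mul h2 h1 (by positivity) (Real.exp_pos _).le
                  _ = Real.exp ((k : ℝ) + 2) := by rw [← Real.exp_add]; ring_nf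
              have hpow : (3 * ((k : ℝ) + 1)) ^ d ≤ Real.exp ((d : ℝ) * ((k : ℝ) + 2)) := by
                calc (3 * ((k : ℝ) + 1)) ^ d ≤ Real.exp ((k : ℝ) + 2) ^ d :=
                    pow_le_pow_left₀ (by positivity) hbase d
                  _ = Real.exp ((d : ℝ) * ((k : ℝ) + 2)) := (Real.exp_nat_mul _ d).symm
              have hrk : r ^ k = Real.exp ((k : ℝ) * (-lam ^ 2)) := by
                rw [hr, ← Real.exp_nat_mul]
              rw [hrk]
              calc (3 * ((k : ℝ) + 1)) ^ d * Real.exp (-(3 * (k : ℝ) ^ 2 * lam ^ 2))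
                  ≤ Real.exp ((d : ℝ) * ((k : ℝ) + 2)) *
                    Real.exp (-(3 * (k : ℝ) ^ 2 * lam ^ 2)) := by
                    apply mul_le_mul_of_nonneg_right hpow (Real.exp_pos _).le
                _ = Real.exp ((d : ℝ) * ((k : ℝ) + 2) - 3 * (k : ℝ) ^ 2 * lam ^ 2) := by
                    rw [← Real.exp_add]; ring_nf
                _ ≤ Real.exp ((k : ℝ) * (-lam ^ 2)) := by
                    apply Real.exp_le_exp.2
                    have hd0' : (0 : ℝ) ≤ (d : ℝ) := Nat.cast_nonneg d
                    nlinarith [sq_nonneg ((k : ℝ) - 1), sq_nonneg lam]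
      have h0K : 0 ∉ K := fun h => by simpa using hK1 0 h
      have hgeom : ∑ k ∈ K, r ^ k ≤ 2 * r := by
        have hsum : ∑ k ∈ K, r ^ k = ∑ k ∈ insert 0 K, r ^ k - 1 := by
          rw [Finset.sum_insert h0K, pow_zero]; ring
        have hle : ∑ k ∈ insert 0 K, r ^ k ≤ (1 - r)⁻¹ := by
          calc ∑ k ∈ insert 0 K, r ^ k ≤ ∑' k : ℕ, r ^ k :=
              Summable.sum_le_tsum _ (fun i _ => pow_nonneg hr0 i)
                (summable_geometric_of_lt_one hr0 hr1)
            _ = (1 - r)⁻¹ := tsum_geometric_of_lt_one hr0 hr1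
        have h12 : (0 : ℝ) < 1 - r := by linarith
        have hinv : (1 - r)⁻¹ ≤ 1 + 2 * r := by
          rw [inv_le_iff_one_le_mul₀ h12]
          nlinarith
        linarith
      calc ∑ k ∈ K, ∑ v ∈ t.filter (fun v => sh v = k), f v
          ≤ ∑ k ∈ K, r ^ k := Finset.sum_le_sum hfib
        _ ≤ 2 * r := hgeom
    linarith
  exact ⟨summable_of_sum_le hfpos key,
    Summable.tsum_le_of_sum_le (summable_of_sum_le hfpos key) key⟩

/-- Analytic core of the main theta-finiteness theorem: if a sequence of nonzero ℤ-lattices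
`L n` satisfies `rank(L n) ≤ C₃ e^{A₃ √n}` and `λ₁(L n) ≥ C e^{-A √n} τ^{-n}` with
`0 < τ < 1`, then the series `∑ₙ h⁰_θ(L n)` converges. -/
theorem summable_theta_invariants (E : ℕ → Type*) [∀ n, NormedAddCommGroup (E n)]
    [∀ n, InnerProductSpace ℝ (E n)] [∀ n, FiniteDimensional ℝ (E n)]
    (L : ∀ n, Submodule ℤ (E n)) [∀ n, DiscreteTopology (L n)] [∀ n, IsZLattice ℝ (L n)]
    (hL : ∀ n, L n ≠ ⊥)
    (C C₃ A A₃ : ℝ) (hC : 0 < C) (hC₃ : 0 < C₃) (hA : 0 < A) (hA₃ : 0 < A₃)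
    (τ : ℝ) (hτ0 : 0 < τ) (hτ1 : τ < 1)
    (hrank : ∀ n : ℕ, (Module.finrank ℝ (E n) : ℝ) ≤ C₃ * Real.exp (A₃ * Real.sqrt n))
    (hmin : ∀ n : ℕ, C * Real.exp (-A * Real.sqrt n) * (1 / τ) ^ n ≤
      sInf ((fun v : E n => ‖v‖) '' {v : E n | v ∈ L n ∧ v ≠ 0})) :
    Summable fun n : ℕ => Real.log (∑' v : L n, Real.exp (-π * ‖(v : E n)‖ ^ 2)) := by
  classical
  set B := -Real.log τ with hBdef
  have hB : 0 < B := by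
    have := Real.log_neg hτ0 hτ1; rw [hBdef]; linarith
  have hsB : Real.sqrt B ≠ 0 := (Real.sqrt_pos.2 hB).ne'
  set lam : ℕ → ℝ := fun n => C * Real.exp (-A * Real.sqrt n) * (1 / τ) ^ n with hlamdef
  have hlampos : ∀ n, 0 < lam n := fun n => by rw [hlamdef]; positivity
  have hlam_exp : ∀ n : ℕ, lam n = C * Real.exp (B * n - A * Real.sqrt n) := by
    intro n
    have h1 : (1 / τ : ℝ) = Real.exp B := by
      rw [hBdef, one_div, ← Real.log_inv, Real.exp_log (by positivity)]
    rw [hlamdef]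
    simp only []
    rw [h1, ← Real.exp_nat_mul, mul_assoc, ← Real.exp_add]
    congr 1
    ring
  -- AM-GM type bounds
  have hAMGM : ∀ (a : ℝ), 0 < a → ∀ n : ℕ, 2 * a * Real.sqrt n ≤ B * n + a ^ 2 / B := by
    intro a ha n
    have key := two_mul_le_add_sq (Real.sqrt B * Real.sqrt n) (a / Real.sqrt B)
    have e1 : (Real.sqrt B * Real.sqrt n) ^ 2 = B * n := by
      rw [mul_pow, Real.sq_sqrt hB.le, Real.sq_sqrt (Nat.cast_nonneg n)]
    have e2 : (a / Real.sqrt B) ^ 2 = a ^ 2 / B := by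
      rw [div_pow, Real.sq_sqrt hB.le]
    have e3 : 2 * (Real.sqrt B * Real.sqrt n) * (a / Real.sqrt B) = 2 * a * Real.sqrt n := by
      field_simp
    rw [e1, e2, e3] at key
    linarith
  set c₁ : ℝ := C ^ 2 * Real.exp (-(A ^ 2 / B)) with hc₁def
  have hc₁ : 0 < c₁ := by rw [hc₁def]; positivity
  have hlamsq : ∀ n : ℕ, c₁ * Real.exp (B * n) ≤ lam n ^ 2 := by
    intro n
    rw [hlam_exp n, mul_pow, sq (Real.exp _), ← Real.exp_add, hc₁def, mul_assoc,
      ← Real.exp_add]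
    apply mul_le_mul_of_nonneg_left _ (by positivity : (0:ℝ) ≤ C ^ 2)
    apply Real.exp_le_exp.2
    have := hAMGM A hA n
    linarith
  set c₂ : ℝ := 2 * C₃ * Real.exp (A₃ ^ 2 / (2 * B)) with hc₂def
  have hc₂ : 0 < c₂ := by rw [hc₂def]; positivity
  have hdim : ∀ n : ℕ, 2 * (Module.finrank ℝ (E n) : ℝ) ≤ c₂ * Real.exp (B / 2 * n) := by
    intro n
    have h1 := hrank n
    have h2 : A₃ * Real.sqrt n ≤ B / 2 * n + A₃ ^ 2 / (2 * B) := by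
      have := hAMGM A₃ hA₃ n
      have hexp : A₃ ^ 2 / (2 * B) = (A₃ ^ 2 / B) / 2 := by ring
      linarith
    have h3 : Real.exp (A₃ * Real.sqrt n) ≤
        Real.exp (A₃ ^ 2 / (2 * B)) * Real.exp (B / 2 * n) := by
      rw [← Real.exp_add]
      exact Real.exp_le_exp.2 (by linarith)
    calc 2 * (Module.finrank ℝ (E n) : ℝ) ≤ 2 * (C₃ * Real.exp (A₃ * Real.sqrt n)) := by
          linarith
      _ ≤ 2 * (C₃ * (Real.exp (A₃ ^ 2 / (2 * B)) * Real.exp (B / 2 * n))) := by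
          apply mul_le_mul_of_nonneg_left _ (by norm_num : (0:ℝ) ≤ 2)
          exact mul_le_mul_of_nonneg_left h3 hC₃.le
      _ = c₂ * Real.exp (B / 2 * n) := by rw [hc₂def]; ring
  set m : ℝ := min 1 (B / 2) with hmdef
  have hm : 0 < m := lt_min one_pos (by positivity)
  set M : ℝ := max (max 4 c₂) (1 / m) with hMdef
  have hT : Tendsto (fun n : ℕ => c₁ * Real.exp (B / 2 * n)) atTop atTop := by
    apply Tendsto.const_mul_atTop hc₁
    apply Real.tendsto_exp_atTop.comp
    exact Tendsto.const_mul_atTop (by positivity) tendsto_natCast_atTop_atTop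
  obtain ⟨N, hN⟩ := Filter.eventually_atTop.1 (hT.eventually_ge_atTop M)
  -- per-index estimates for n ≥ N
  have hper : ∀ n : ℕ, N ≤ n →
      0 ≤ Real.log (∑' v : L n, Real.exp (-π * ‖(v : E n)‖ ^ 2)) ∧
      Real.log (∑' v : L n, Real.exp (-π * ‖(v : E n)‖ ^ 2)) ≤
        2 * Real.exp (-((n : ℝ) + 1)) := by
    intro n hn
    have hMn : M ≤ c₁ * Real.exp (B / 2 * n) := hN n hn
    have hexp1 : (1 : ℝ) ≤ Real.exp (B / 2 * n) := Real.one_le_exp (by positivity)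
    have hprod : c₁ * Real.exp (B / 2 * n) * Real.exp (B / 2 * n) = c₁ * Real.exp (B * n) := by
      rw [mul_assoc, ← Real.exp_add]
      congr 2
      ring
    have hbig : c₁ * Real.exp (B / 2 * n) ≤ c₁ * Real.exp (B * n) := by
      calc c₁ * Real.exp (B / 2 * n) = c₁ * Real.exp (B / 2 * n) * 1 := by ring
        _ ≤ c₁ * Real.exp (B / 2 * n) * Real.exp (B / 2 * n) := by
            apply mul_le_mul_of_nonneg_left hexp1 (by positivity)
        _ = c₁ * Real.exp (B * n) := hprod
    -- (a) 4 ≤ lam n ^ 2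
    have ha : (4 : ℝ) ≤ lam n ^ 2 := by
      have h4 : (4 : ℝ) ≤ M := le_max_of_le_left (le_max_left _ _)
      calc (4 : ℝ) ≤ c₁ * Real.exp (B / 2 * n) := le_trans h4 hMn
        _ ≤ c₁ * Real.exp (B * n) := hbig
        _ ≤ lam n ^ 2 := hlamsq n
    have h2lam : 2 ≤ lam n := by nlinarith [hlampos n]
    -- (b) 2 * d ≤ lam n ^ 2
    have hb : 2 * (Module.finrank ℝ (E n) : ℝ) ≤ lam n ^ 2 := by
      have hc2M : c₂ ≤ M := le_max_of_le_left (le_max_right _ _)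
      calc 2 * (Module.finrank ℝ (E n) : ℝ) ≤ c₂ * Real.exp (B / 2 * n) := hdim n
        _ ≤ (c₁ * Real.exp (B / 2 * n)) * Real.exp (B / 2 * n) := by
            apply mul_le_mul_of_nonneg_right (le_trans hc2M hMn) (Real.exp_pos _).le
        _ = c₁ * Real.exp (B * n) := hprod
        _ ≤ lam n ^ 2 := hlamsq n
    -- (c) n + 1 ≤ lam n ^ 2
    have hc : (n : ℝ) + 1 ≤ lam n ^ 2 := by
      have hm1 : m * ((n : ℝ) + 1) ≤ B / 2 * n + 1 := by
        have e1 : m ≤ B / 2 := min_le_right _ _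
        have e2 : m ≤ 1 := min_le_left _ _
        have : m * ((n : ℝ) + 1) = m * n + m := by ring
        rw [this]
        have : m * (n : ℝ) ≤ B / 2 * n := mul_le_mul_of_nonneg_right e1 (Nat.cast_nonneg n)
        linarith
      have hm2 : m * ((n : ℝ) + 1) ≤ Real.exp (B / 2 * n) := by
        have := Real.add_one_le_exp (B / 2 * n)
        linarith
      have hm3 : (n : ℝ) + 1 ≤ (1 / m) * Real.exp (B / 2 * n) := by
        rw [one_div, ← div_eq_inv_mul, le_div_iff₀ hm]
        nlinarith [hm2]
      have h1M : (1 / m) ≤ M := le_max_right _ _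
      calc (n : ℝ) + 1 ≤ (1 / m) * Real.exp (B / 2 * n) := hm3
        _ ≤ (c₁ * Real.exp (B / 2 * n)) * Real.exp (B / 2 * n) := by
            apply mul_le_mul_of_nonneg_right (le_trans h1M hMn) (Real.exp_pos _).le
        _ = c₁ * Real.exp (B * n) := hprod
        _ ≤ lam n ^ 2 := hlamsq n
    -- minimum bound
    have hminn : ∀ v : E n, v ∈ L n → v ≠ 0 → lam n ≤ ‖v‖ := by
      intro v hv hv0
      have h1 := hmin n
      have hbdd : BddBelow ((fun v : E n => ‖v‖) '' {v : E n | v ∈ L n ∧ v ≠ 0}) := by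
        refine ⟨0, ?_⟩
        rintro x ⟨w, -, rfl⟩
        exact norm_nonneg w
      have h2 : sInf ((fun v : E n => ‖v‖) '' {v : E n | v ∈ L n ∧ v ≠ 0}) ≤ ‖v‖ :=
        csInf_le hbdd ⟨v, ⟨hv, hv0⟩, rfl⟩
      calc lam n = C * Real.exp (-A * Real.sqrt n) * (1 / τ) ^ n := by rw [hlamdef]
        _ ≤ _ := h1
        _ ≤ ‖v‖ := h2
    obtain ⟨hsum, hle⟩ := theta_bound (L n) (lam n) h2lam hb hminn
    have hθ1 : (1 : ℝ) ≤ ∑' v : L n, Real.exp (-π * ‖(v : E n)‖ ^ 2) := by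
      have := Summable.le_tsum hsum (⟨0, (L n).zero_mem⟩ : L n) (fun j _ => (Real.exp_pos _).le)
      simpa using this
    constructor
    · exact Real.log_nonneg hθ1
    · have hlog : Real.log (∑' v : L n, Real.exp (-π * ‖(v : E n)‖ ^ 2)) ≤
          (∑' v : L n, Real.exp (-π * ‖(v : E n)‖ ^ 2)) - 1 :=
        Real.log_le_sub_one_of_pos (by linarith)
      have h2e : Real.exp (-lam n ^ 2) ≤ Real.exp (-((n : ℝ) + 1)) :=
        Real.exp_le_exp.2 (by linarith)
      linarith
  -- conclude
  rw [← summable_nat_add_iff N]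
  refine Summable.of_nonneg_of_le
    (fun n => (hper (n + N) (Nat.le_add_left N n)).1)
    (fun n => ?_)
    ((summable_geometric_of_lt_one (Real.exp_pos _).le
      (Real.exp_lt_one_iff.2 (by norm_num : (-1:ℝ) < 0))).mul_left 2)
  · have h1 := (hper (n + N) (Nat.le_add_left N n)).2
    have h2 : Real.exp (-(((n + N : ℕ) : ℝ) + 1)) ≤ Real.exp (-1 : ℝ) ^ n := by
      rw [← Real.exp_nat_mul]
      apply Real.exp_le_exp.2
      push_cast
      linarith [Nat.cast_nonneg (α := ℝ) N]
    calc Real.log (∑' v : L (n + N), Real.exp (-π * ‖(v : E (n + N))‖ ^ 2))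
        ≤ 2 * Real.exp (-(((n + N : ℕ) : ℝ) + 1)) := h1
      _ ≤ 2 * Real.exp (-1 : ℝ) ^ n := by linarith
end

section
/- (Theta-finiteness.) Let (E_n)_{n ∈ ℕ} be a sequence of finite-dimensional real inner product spaces and, for each n, let L_n ⊆ E_n be a nonzero ℤ-lattice. Suppose there exist constants C, C₃, A, A₃ > 0 and a real number τ with 0 < τ < 1 such that for all n: rank(L_n) ≤ C₃ · e^{A₃√n} and λ₁(L_n) ≥ C · e^{−A√n} · τ^{−n}. Then for every real number t > 0, the series ∑_{n ≥ 0} log ( ∑_{v ∈ L_n} exp(−π t ‖v‖²) ) converges. -/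
open Real Filter MeasureTheory Metric Module
open scoped ENNReal NNReal

/-- Packing bound: a finite set of `r`-separated points in a ball of radius `R` in a
finite-dimensional normed space has at most `(2R/r + 1)^d` elements. -/
lemma packing_card_bound {V : Type*} [NormedAddCommGroup V] [NormedSpace ℝ V]
    [FiniteDimensional ℝ V] {r R : ℝ} (hr : 0 < r) (hR : 0 ≤ R) (s : Finset V)
    (hsep : ∀ v ∈ s, ∀ w ∈ s, v ≠ w → r ≤ ‖v - w‖)
    (hnorm : ∀ v ∈ s, ‖v‖ ≤ R) :
    (s.card : ℝ) ≤ (2 * R / r + 1) ^ finrank ℝ V := by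
  borelize V
  set d := finrank ℝ V with hd
  set μ : Measure V := Measure.addHaar with hμ
  have hdisj : (↑s : Set V).PairwiseDisjoint fun v => ball v (r / 2) := by
    intro v hv w hw hvw
    apply ball_disjoint_ball
    rw [dist_eq_norm]
    have := hsep v hv w hw hvw
    linarith
  have hunion : (⋃ v ∈ s, ball v (r / 2)) ⊆ ball 0 (R + r / 2) := by
    intro x hx
    simp only [Set.mem_iUnion, exists_prop] at hx
    obtain ⟨v, hv, hxv⟩ := hx
    rw [mem_ball, dist_eq_norm] at hxv
    rw [mem_ball, dist_zero_right]
    have h1 : ‖x‖ ≤ ‖v‖ + ‖x - v‖ := by simpa using norm_add_le v (x - v)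
    have h2 := hnorm v hv
    linarith
  have hmeas : μ (⋃ v ∈ s, ball v (r / 2)) = s.card * (ENNReal.ofReal ((r / 2) ^ d) * μ (ball 0 1)) := by
    rw [measure_biUnion_finset hdisj fun _ _ => measurableSet_ball]
    rw [Finset.sum_congr rfl fun v _ => Measure.addHaar_ball_of_pos μ v (half_pos hr)]
    rw [Finset.sum_const, nsmul_eq_mul]
  have hle : (s.card : ℝ≥0∞) * (ENNReal.ofReal ((r / 2) ^ d) * μ (ball 0 1)) ≤
      ENNReal.ofReal ((R + r / 2) ^ d) * μ (ball 0 1) := by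
    rw [← hmeas, ← Measure.addHaar_ball_of_pos μ (0 : V) (by linarith : (0:ℝ) < R + r / 2)]
    exact measure_mono hunion
  rw [← mul_assoc] at hle
  have hball0 : μ (ball (0:V) 1) ≠ 0 := (measure_ball_pos μ 0 one_pos).ne'
  have hballt : μ (ball (0:V) 1) ≠ ⊤ := measure_ball_lt_top.ne
  rw [ENNReal.mul_le_mul_iff_left hball0 hballt] at hle
  rw [← ENNReal.ofReal_natCast, ← ENNReal.ofReal_mul (by positivity)] at hle
  rw [ENNReal.ofReal_le_ofReal_iff (by positivity)] at hle
  have hpow : (0:ℝ) < (r / 2) ^ d := by positivity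
  rw [← le_div_iff₀ hpow] at hle
  calc (s.card : ℝ) ≤ (R + r / 2) ^ d / (r / 2) ^ d := hle
  _ = ((R + r / 2) / (r / 2)) ^ d := (div_pow _ _ _).symm
  _ = (2 * R / r + 1) ^ d := by
      congr 1
      field_simp

/-- The set of lattice points of norm at most `R` is finite. -/
lemma lattice_ball_finite {V : Type*} [NormedAddCommGroup V] [NormedSpace ℝ V]
    [FiniteDimensional ℝ V] (Λ : Submodule ℤ V) [DiscreteTopology Λ] (R : ℝ) :
    {w : V | w ∈ Λ ∧ ‖w‖ ≤ R}.Finite := by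
  have h1 : DiscreteTopology Λ.toAddSubgroup := (inferInstance : DiscreteTopology Λ)
  have h2 : (closedBall (0:V) R ∩ (Λ.toAddSubgroup : Set V)).Finite :=
    Metric.finite_isBounded_inter_isClosed DiscreteTopology.isDiscrete isBounded_closedBall inferInstance
  refine h2.subset fun w hw => ⟨mem_closedBall_zero_iff.mpr hw.2, hw.1⟩


lemma two_mul_add_three_le_exp (k : ℕ) : (2 * (k:ℝ) + 3) ≤ Real.exp ((k:ℝ) + 2) := by
  have h1 : (k:ℝ) + 1 + 1 ≤ Real.exp ((k:ℝ) + 1) := Real.add_one_le_exp _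
  have h2 : (2:ℝ) ≤ Real.exp 1 := by
    have := Real.add_one_le_exp (1:ℝ); linarith
  have h3 : Real.exp ((k:ℝ) + 2) = Real.exp 1 * Real.exp ((k:ℝ) + 1) := by
    rw [← Real.exp_add]; ring_nf
  have hk : (0:ℝ) ≤ (k:ℝ) := Nat.cast_nonneg k
  nlinarith [Real.exp_pos ((k:ℝ) + 1)]

/-- Main per-lattice theta bound, in `ℝ≥0∞`. -/
lemma theta_bound_s8 {V : Type*} [NormedAddCommGroup V] [NormedSpace ℝ V]
    [FiniteDimensional ℝ V] (Λ : Submodule ℤ V) [DiscreteTopology Λ]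
    {t r : ℝ} (ht : 0 < t) (hr : 0 < r)
    (hmin : ∀ v ∈ Λ, v ≠ (0:V) → r ≤ ‖v‖) (n : ℕ)
    (hbig : 3 * (finrank ℝ V : ℝ) + n + 1 ≤ π * t * r ^ 2) :
    ∑' v : Λ, ENNReal.ofReal (Real.exp (-π * t * ‖(v:V)‖ ^ 2)) ≤
      ENNReal.ofReal (1 + 2 * Real.exp (-(n:ℝ))) := by
  classical
  set d := finrank ℝ V with hd
  set F : Λ → ℝ≥0∞ := fun v => ENNReal.ofReal (Real.exp (-π * t * ‖(v:V)‖ ^ 2)) with hF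
  set G : Λ → ℝ≥0∞ := fun v => if v = 0 then 0 else F v with hG
  have hsplit : ∑' v, F v = F 0 + ∑' v, G v := by
    have hpt : ∀ v, F v = (if v = 0 then F 0 else 0) + G v := by
      intro v; by_cases h : v = 0 <;> simp [hG, h]
    rw [tsum_congr hpt, ENNReal.tsum_add,
      tsum_eq_single (0 : Λ) (fun c hc => by simp [hc])]
    simp
  have hF0 : F 0 = 1 := by
    simp [hF]
  -- fibers
  set κ : Λ → ℕ := fun v => ⌊‖(v:V)‖ / r⌋₊ with hκ
  have hGsum : ∑' v, G v = ∑' (k : ℕ), ∑' (v : {v : Λ // κ v = k}), G v.1 := by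
    calc ∑' v, G v = ∑' p : (Σ k : ℕ, {v : Λ // κ v = k}), G ((Equiv.sigmaFiberEquiv κ) p) :=
        ((Equiv.sigmaFiberEquiv κ).tsum_eq G).symm
    _ = ∑' (k : ℕ) (v : {v : Λ // κ v = k}), G v.1 := ENNReal.tsum_sigma' _
  have hπt : (0:ℝ) < π * t := mul_pos Real.pi_pos ht
  have hfiber : ∀ k : ℕ, ∑' (v : {v : Λ // κ v = k}), G v.1 ≤
      ENNReal.ofReal (Real.exp (-(n:ℝ)) * Real.exp (-1) ^ k) := by
    intro k
    rcases Nat.eq_zero_or_pos k with rfl | hk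
    · have hz : ∀ v : {v : Λ // κ v = 0}, G v.1 = 0 := by
        rintro ⟨v, hv⟩
        by_cases h0 : v = 0
        · simp [hG, h0]
        · exfalso
          have hrle : r ≤ ‖(v:V)‖ := hmin v v.2 (fun h => h0 (by exact_mod_cast Subtype.ext h))
          have hflo : (1:ℕ) ≤ ⌊‖(v:V)‖ / r⌋₊ := by
            apply Nat.le_floor
            rw [Nat.cast_one, le_div_iff₀ hr]; linarith
          simp only [hκ] at hv
          omega
      simp only [hz]
      simp [tsum_zero]
    · -- k ≥ 1
      set S : Set V := {w : V | w ∈ Λ ∧ ‖w‖ ≤ ((k:ℝ) + 1) * r} with hS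
      have hfin : S.Finite := lattice_ball_finite Λ _
      haveI hftS : Fintype S := hfin.fintype
      have hmem : ∀ v : {v : Λ // κ v = k}, ((v.1 : Λ) : V) ∈ S := by
        rintro ⟨⟨v, hvΛ⟩, hvκ⟩
        refine ⟨hvΛ, ?_⟩
        have h1 : ‖v‖ / r < (⌊‖v‖ / r⌋₊ : ℝ) + 1 := Nat.lt_floor_add_one _
        simp only [κ] at hvκ
        rw [hvκ] at h1
        rw [div_lt_iff₀ hr] at h1
        exact h1.le
      set ι : {v : Λ // κ v = k} → S := fun v => ⟨(v.1 : V), hmem v⟩ with hι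
      have hinj : Function.Injective ι := by
        intro a b hab
        simp only [hι, Subtype.mk.injEq] at hab
        exact Subtype.ext (Subtype.ext hab)
      haveI : Fintype {v : Λ // κ v = k} := Fintype.ofInjective ι hinj
      -- term bound
      have hterm : ∀ v : {v : Λ // κ v = k},
          G v.1 ≤ ENNReal.ofReal (Real.exp (-((k:ℝ) * (π * t * r ^ 2)))) := by
        rintro ⟨⟨v, hvΛ⟩, hvκ⟩
        by_cases h0 : (⟨v, hvΛ⟩ : Λ) = 0
        · simp [hG, h0]
        · have hv0 : v ≠ 0 := fun h => h0 (Subtype.ext h)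
          have hge : (k:ℝ) * r ≤ ‖v‖ := by
            have h1 : (⌊‖v‖ / r⌋₊ : ℝ) ≤ ‖v‖ / r := Nat.floor_le (by positivity)
            simp only [κ] at hvκ
            rw [hvκ] at h1
            rw [le_div_iff₀ hr] at h1
            linarith
          have hk1 : (1:ℝ) ≤ (k:ℝ) := by exact_mod_cast hk
          have hnorm2 : (k:ℝ) * r ^ 2 ≤ ‖v‖ ^ 2 := by
            have h2 : ((k:ℝ) * r) ^ 2 ≤ ‖v‖ ^ 2 := by
              apply sq_le_sq' _ hge
              have : (0:ℝ) ≤ (k:ℝ) * r := by positivity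
              linarith [norm_nonneg v]
            have h3 : (k:ℝ) * r ^ 2 ≤ ((k:ℝ) * r) ^ 2 := by nlinarith
            linarith
          simp only [hG, hF, if_neg h0]
          apply ENNReal.ofReal_le_ofReal
          apply Real.exp_le_exp.mpr
          have := mul_le_mul_of_nonneg_left hnorm2 hπt.le
          nlinarith
      calc ∑' (v : {v : Λ // κ v = k}), G v.1
          = ∑ v : {v : Λ // κ v = k}, G v.1 := tsum_fintype _
        _ ≤ (Finset.univ.card : ℕ) •
              ENNReal.ofReal (Real.exp (-((k:ℝ) * (π * t * r ^ 2)))) :=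
            Finset.sum_le_card_nsmul _ _ _ (fun v _ => hterm v)
        _ = (Fintype.card {v : Λ // κ v = k} : ℝ≥0∞) *
              ENNReal.ofReal (Real.exp (-((k:ℝ) * (π * t * r ^ 2)))) := by
            rw [nsmul_eq_mul]; rfl
        _ ≤ ENNReal.ofReal (Real.exp (-(n:ℝ)) * Real.exp (-1) ^ k) := by
            rw [← ENNReal.ofReal_natCast, ← ENNReal.ofReal_mul (by positivity)]
            apply ENNReal.ofReal_le_ofReal
            -- card bound
            have hcard1 : Fintype.card {v : Λ // κ v = k} ≤ Fintype.card S :=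
              Fintype.card_le_of_injective ι hinj
            have hcard2 : (Fintype.card S : ℝ) ≤ (2 * (((k:ℝ) + 1) * r) / r + 1) ^ d := by
              rw [← Set.toFinset_card]
              apply packing_card_bound hr (by positivity) S.toFinset
              · intro v hv w hw hvw
                rw [Set.mem_toFinset] at hv hw
                apply hmin _ (Submodule.sub_mem _ hv.1 hw.1) (sub_ne_zero_of_ne hvw)
              · intro v hv
                rw [Set.mem_toFinset] at hv
                exact hv.2
            have hsimp : 2 * (((k:ℝ) + 1) * r) / r + 1 = 2 * (k:ℝ) + 3 := by
              field_simp; ring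
            rw [hsimp] at hcard2
            have hcard : (Fintype.card {v : Λ // κ v = k} : ℝ) ≤ (2 * (k:ℝ) + 3) ^ d :=
              le_trans (by exact_mod_cast hcard1) hcard2
            -- exponential estimates
            have hb1 : (2 * (k:ℝ) + 3) ^ d ≤ Real.exp (((k:ℝ) + 2) * d) := by
              calc (2 * (k:ℝ) + 3) ^ d ≤ (Real.exp ((k:ℝ) + 2)) ^ d :=
                  pow_le_pow_left₀ (by positivity) (two_mul_add_three_le_exp k) d
              _ = Real.exp (((k:ℝ) + 2) * d) := by
                  rw [← Real.exp_nat_mul]; ring_nf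
            have hk1 : (1:ℝ) ≤ (k:ℝ) := by exact_mod_cast hk
            have hb2 : Real.exp (-((k:ℝ) * (π * t * r ^ 2))) ≤
                Real.exp (-((k:ℝ) * (3 * (d:ℝ) + n + 1))) := by
              apply Real.exp_le_exp.mpr
              have := mul_le_mul_of_nonneg_left hbig (by linarith : (0:ℝ) ≤ (k:ℝ))
              linarith
            have hdn : (0:ℝ) ≤ (d:ℝ) := Nat.cast_nonneg d
            have hnn : (0:ℝ) ≤ (n:ℝ) := Nat.cast_nonneg n
            calc (Fintype.card {v : Λ // κ v = k} : ℝ) *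
                  Real.exp (-((k:ℝ) * (π * t * r ^ 2)))
                ≤ (2 * (k:ℝ) + 3) ^ d * Real.exp (-((k:ℝ) * (π * t * r ^ 2))) := by
                  apply mul_le_mul_of_nonneg_right hcard (Real.exp_pos _).le
              _ ≤ Real.exp (((k:ℝ) + 2) * d) * Real.exp (-((k:ℝ) * (3 * (d:ℝ) + n + 1))) :=
                  mul_le_mul hb1 hb2 (Real.exp_pos _).le (Real.exp_pos _).le
              _ = Real.exp (((k:ℝ) + 2) * d - (k:ℝ) * (3 * (d:ℝ) + n + 1)) := by
                  rw [← Real.exp_add]; ring_nf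
              _ ≤ Real.exp (-(n:ℝ) + (-1) * k) := by
                  apply Real.exp_le_exp.mpr
                  nlinarith
              _ = Real.exp (-(n:ℝ)) * Real.exp (-1) ^ k := by
                  rw [Real.exp_add, ← Real.exp_nat_mul]; ring_nf
  -- sum the fiber bounds
  have hsum2 : ∑' (k : ℕ), ∑' (v : {v : Λ // κ v = k}), G v.1 ≤
      ENNReal.ofReal (2 * Real.exp (-(n:ℝ))) := by
    calc ∑' (k : ℕ), ∑' (v : {v : Λ // κ v = k}), G v.1
        ≤ ∑' (k : ℕ), ENNReal.ofReal (Real.exp (-(n:ℝ)) * Real.exp (-1) ^ k) :=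
          ENNReal.tsum_le_tsum hfiber
      _ = ENNReal.ofReal (Real.exp (-(n:ℝ))) * ∑' (k : ℕ), (ENNReal.ofReal (Real.exp (-1))) ^ k := by
          rw [← ENNReal.tsum_mul_left]
          congr 1; ext k
          rw [← ENNReal.ofReal_pow (Real.exp_pos _).le, ← ENNReal.ofReal_mul (Real.exp_pos _).le]
      _ ≤ ENNReal.ofReal (Real.exp (-(n:ℝ))) * ∑' (k : ℕ), ((2:ℝ≥0∞)⁻¹) ^ k := by
          apply mul_le_mul_right (ENNReal.tsum_le_tsum fun k => pow_le_pow_left₀ ?_ ?_ k)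
          · exact zero_le
          · have he : Real.exp (-1) ≤ 2⁻¹ := by
              rw [Real.exp_neg]
              have h2 : (2:ℝ) ≤ Real.exp 1 := by
                have := Real.add_one_le_exp (1:ℝ); linarith
              rw [inv_le_inv₀ (Real.exp_pos 1) (by norm_num)]
              exact h2
            calc ENNReal.ofReal (Real.exp (-1)) ≤ ENNReal.ofReal (2⁻¹) :=
                ENNReal.ofReal_le_ofReal he
            _ = (2:ℝ≥0∞)⁻¹ := by
                rw [ENNReal.ofReal_inv_of_pos (by norm_num)]
                norm_num
      _ = ENNReal.ofReal (Real.exp (-(n:ℝ))) * 2 := by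
          rw [ENNReal.tsum_geometric, ENNReal.one_sub_inv_two, inv_inv]
      _ = ENNReal.ofReal (2 * Real.exp (-(n:ℝ))) := by
          rw [ENNReal.ofReal_mul (by norm_num), ENNReal.ofReal_ofNat, mul_comm]
  calc ∑' v, F v = F 0 + ∑' v, G v := hsplit
    _ ≤ 1 + ENNReal.ofReal (2 * Real.exp (-(n:ℝ))) := by
        rw [hF0, hGsum]; exact add_le_add_right hsum2 _
    _ = ENNReal.ofReal (1 + 2 * Real.exp (-(n:ℝ))) := by
        rw [ENNReal.ofReal_add (by norm_num) (by positivity), ENNReal.ofReal_one]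



lemma eventually_growth {C C₃ A A₃ t τ : ℝ} (hC : 0 < C) (hC₃ : 0 < C₃) (hA : 0 < A)
    (hA₃ : 0 < A₃) (ht : 0 < t) (hτ0 : 0 < τ) (hτ1 : τ < 1) (d : ℕ → ℝ)
    (hd : ∀ n, d n ≤ C₃ * Real.exp (A₃ * Real.sqrt n)) :
    ∀ᶠ n : ℕ in atTop,
      3 * d n + n + 1 ≤ π * t * (C * Real.exp (-A * Real.sqrt n) * (1 / τ) ^ n) ^ 2 := by
  set B := Real.log (1 / τ) with hBdef
  have h1τ : (1:ℝ) < 1 / τ := by rw [lt_div_iff₀ hτ0, one_mul]; exact hτ1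
  have hB : 0 < B := Real.log_pos h1τ
  have hτe : (1 / τ : ℝ) = Real.exp B := (Real.exp_log (by positivity)).symm
  have e2 : ∀ x : ℝ, (Real.exp x) ^ 2 = Real.exp (2 * x) := by
    intro x; rw [pow_two, ← Real.exp_add]; ring_nf
  have hc : 0 < π * t * C ^ 2 := by positivity
  set c := π * t * C ^ 2 with hcdef
  -- first eventuality
  have h1 : ∀ᶠ n : ℕ in atTop, (2 * A + A₃) * Real.sqrt n ≤ B * n := by
    filter_upwards [tendsto_natCast_atTop_atTop.eventually_ge_atTop
      (((2 * A + A₃) / B) ^ 2)] with n hn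
    have hs : (2 * A + A₃) / B ≤ Real.sqrt n := by
      rw [← Real.sqrt_sq (by positivity : (0:ℝ) ≤ (2 * A + A₃) / B)]
      exact Real.sqrt_le_sqrt hn
    have hsn : (0:ℝ) ≤ Real.sqrt n := Real.sqrt_nonneg _
    have h2 : 2 * A + A₃ ≤ B * Real.sqrt n := by
      rw [div_le_iff₀ hB] at hs; linarith
    calc (2 * A + A₃) * Real.sqrt n ≤ (B * Real.sqrt n) * Real.sqrt n :=
        mul_le_mul_of_nonneg_right h2 hsn
    _ = B * n := by rw [mul_assoc, Real.mul_self_sqrt (Nat.cast_nonneg n)]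
  -- second eventuality
  have h2 : ∀ᶠ n : ℕ in atTop, (n:ℝ) + 1 + 3 * C₃ ≤ c * Real.exp (B * n) := by
    have ht1 : Tendsto (fun n : ℕ => B * (n:ℝ)) atTop atTop :=
      Tendsto.const_mul_atTop hB tendsto_natCast_atTop_atTop
    have ht2 : Tendsto (fun n : ℕ => Real.exp (B * n) / (B * n)) atTop atTop := by
      have := (Real.tendsto_exp_div_pow_atTop 1).comp ht1
      simpa [pow_one, Function.comp_def] using this
    filter_upwards [ht2.eventually_ge_atTop (2 / (c * B)),
      eventually_ge_atTop 1, tendsto_natCast_atTop_atTop.eventually_ge_atTop (1 + 3 * C₃)]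
      with n hn hn1 hn2
    have hBn : (0:ℝ) < B * n := by
      have : (1:ℝ) ≤ (n:ℝ) := by exact_mod_cast hn1
      positivity
    rw [le_div_iff₀ hBn] at hn
    have hkey : 2 * (n:ℝ) ≤ c * Real.exp (B * n) := by
      have := mul_le_mul_of_nonneg_left hn hc.le
      calc 2 * (n:ℝ) = c * (2 / (c * B) * (B * n)) := by
            field_simp
          _ ≤ c * Real.exp (B * n) := this
    linarith
  filter_upwards [h1, h2] with n hn1 hn2
  have hrw : (C * Real.exp (-A * Real.sqrt n) * (1 / τ) ^ n) ^ 2 =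
      C ^ 2 * Real.exp (2 * B * n - 2 * A * Real.sqrt n) := by
    rw [hτe, ← Real.exp_nat_mul]
    calc (C * Real.exp (-A * Real.sqrt n) * Real.exp ((n:ℝ) * B)) ^ 2
        = C ^ 2 * (Real.exp (-A * Real.sqrt n) * Real.exp ((n:ℝ) * B)) ^ 2 := by ring
      _ = C ^ 2 * (Real.exp (-A * Real.sqrt n + (n:ℝ) * B)) ^ 2 := by rw [Real.exp_add]
      _ = C ^ 2 * Real.exp (2 * (-A * Real.sqrt n + (n:ℝ) * B)) := by rw [e2]
      _ = C ^ 2 * Real.exp (2 * B * n - 2 * A * Real.sqrt n) := by ring_nf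
  rw [hrw]
  have hy : (1:ℝ) ≤ Real.exp (A₃ * Real.sqrt n) :=
    Real.one_le_exp (by positivity)
  have step1 : 3 * d n + n + 1 ≤ ((n:ℝ) + 1 + 3 * C₃) * Real.exp (A₃ * Real.sqrt n) := by
    have h3 := hd n
    nlinarith [Nat.cast_nonneg (α := ℝ) n]
  have step2 : ((n:ℝ) + 1 + 3 * C₃) * Real.exp (A₃ * Real.sqrt n) ≤
      c * Real.exp (B * n) * Real.exp (A₃ * Real.sqrt n) :=
    mul_le_mul_of_nonneg_right hn2 (by positivity)
  have step3 : c * Real.exp (B * n) * Real.exp (A₃ * Real.sqrt n) ≤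
      c * Real.exp (2 * B * n - 2 * A * Real.sqrt n) := by
    rw [mul_assoc, ← Real.exp_add]
    apply mul_le_mul_of_nonneg_left _ hc.le
    apply Real.exp_le_exp.mpr
    linarith
  calc 3 * d n + n + 1 ≤ c * Real.exp (2 * B * n - 2 * A * Real.sqrt n) :=
        le_trans step1 (le_trans step2 step3)
    _ = π * t * (C ^ 2 * Real.exp (2 * B * n - 2 * A * Real.sqrt n)) := by
        rw [hcdef]; ring


/-- Theta-finiteness: under the rank and first-minimum growth hypotheses, for every `t > 0`
the series of `t`-scaled theta invariants `∑ₙ log ∑_{v ∈ L n} exp(-π t ‖v‖²)` converges. -/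
theorem theta_finiteness (E : ℕ → Type*) [∀ n, NormedAddCommGroup (E n)]
    [∀ n, InnerProductSpace ℝ (E n)] [∀ n, FiniteDimensional ℝ (E n)]
    (L : ∀ n, Submodule ℤ (E n)) [∀ n, DiscreteTopology (L n)] [∀ n, IsZLattice ℝ (L n)]
    (hL : ∀ n, L n ≠ ⊥)
    (C C₃ A A₃ : ℝ) (hC : 0 < C) (hC₃ : 0 < C₃) (hA : 0 < A) (hA₃ : 0 < A₃)
    (τ : ℝ) (hτ0 : 0 < τ) (hτ1 : τ < 1)
    (hrank : ∀ n : ℕ, (Module.finrank ℝ (E n) : ℝ) ≤ C₃ * Real.exp (A₃ * Real.sqrt n))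
    (hmin : ∀ n : ℕ, C * Real.exp (-A * Real.sqrt n) * (1 / τ) ^ n ≤
      sInf ((fun v : E n => ‖v‖) '' {v : E n | v ∈ L n ∧ v ≠ 0})) :
    ∀ t : ℝ, 0 < t →
      Summable fun n : ℕ =>
        Real.log (∑' v : L n, Real.exp (-π * t * ‖(v : E n)‖ ^ 2)) := by
  intro t ht
  have hgrowth := eventually_growth hC hC₃ hA hA₃ ht hτ0 hτ1
    (fun n => (Module.finrank ℝ (E n) : ℝ)) hrank
  obtain ⟨N, hN⟩ := eventually_atTop.mp hgrowth
  have key : ∀ m : ℕ, N ≤ m →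
      0 ≤ Real.log (∑' v : L m, Real.exp (-π * t * ‖(v : E m)‖ ^ 2)) ∧
      Real.log (∑' v : L m, Real.exp (-π * t * ‖(v : E m)‖ ^ 2)) ≤ 2 * Real.exp (-(m:ℝ)) := by
    intro m hm
    have hbig := hN m hm
    set rm : ℝ := C * Real.exp (-A * Real.sqrt m) * (1 / τ) ^ m with hrm
    have hrpos : 0 < rm := by positivity
    have hmin' : ∀ v ∈ L m, v ≠ (0 : E m) → rm ≤ ‖v‖ := by
      intro v hv hv0
      refine le_trans (hmin m) (csInf_le ⟨0, ?_⟩ ⟨v, ⟨hv, hv0⟩, rfl⟩)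
      rintro x ⟨w, -, rfl⟩
      exact norm_nonneg w
    have hT := theta_bound_s8 (L m) ht hrpos hmin' m hbig
    have hne : (∑' v : L m, ENNReal.ofReal (Real.exp (-π * t * ‖(v : E m)‖ ^ 2))) ≠ ⊤ :=
      (lt_of_le_of_lt hT ENNReal.ofReal_lt_top).ne
    have hsumm : Summable fun v : L m => Real.exp (-π * t * ‖(v : E m)‖ ^ 2) := by
      have := ENNReal.summable_toReal hne
      simpa only [ENNReal.toReal_ofReal (Real.exp_pos _).le] using this
    have htsum_eq : ∑' v : L m, Real.exp (-π * t * ‖(v : E m)‖ ^ 2) =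
        (∑' v : L m, ENNReal.ofReal (Real.exp (-π * t * ‖(v : E m)‖ ^ 2))).toReal := by
      rw [ENNReal.tsum_toReal_eq fun _ => ENNReal.ofReal_ne_top]
      exact tsum_congr fun v => (ENNReal.toReal_ofReal (Real.exp_pos _).le).symm
    have hub : ∑' v : L m, Real.exp (-π * t * ‖(v : E m)‖ ^ 2) ≤ 1 + 2 * Real.exp (-(m:ℝ)) := by
      rw [htsum_eq]
      exact ENNReal.toReal_le_of_le_ofReal (by positivity) hT
    have hlb : (1:ℝ) ≤ ∑' v : L m, Real.exp (-π * t * ‖(v : E m)‖ ^ 2) := by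
      have h0 : Real.exp (-π * t * ‖((0 : L m) : E m)‖ ^ 2) = 1 := by simp
      calc (1:ℝ) = Real.exp (-π * t * ‖((0 : L m) : E m)‖ ^ 2) := h0.symm
        _ ≤ ∑' v : L m, Real.exp (-π * t * ‖(v : E m)‖ ^ 2) :=
          Summable.le_tsum hsumm 0 fun c _ => (Real.exp_pos _).le
    refine ⟨Real.log_nonneg hlb, ?_⟩
    calc Real.log (∑' v : L m, Real.exp (-π * t * ‖(v : E m)‖ ^ 2))
        ≤ (∑' v : L m, Real.exp (-π * t * ‖(v : E m)‖ ^ 2)) - 1 :=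
          Real.log_le_sub_one_of_pos (by linarith)
      _ ≤ 2 * Real.exp (-(m:ℝ)) := by linarith
  rw [← summable_nat_add_iff N]
  refine Summable.of_nonneg_of_le
      (fun n => (key (n + N) (Nat.le_add_left N n)).1)
      (fun n => ?_)
      ((summable_geometric_of_lt_one (Real.exp_pos _).le
        (Real.exp_lt_one_iff.mpr (by norm_num : (-1:ℝ) < 0))).mul_left 2)
  calc Real.log (∑' v : L (n + N), Real.exp (-π * t * ‖(v : E (n + N))‖ ^ 2))
      ≤ 2 * Real.exp (-((n + N : ℕ) : ℝ)) := (key (n + N) (Nat.le_add_left N n)).2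
    _ ≤ 2 * Real.exp (-1) ^ n := by
        have h1 : Real.exp (-((n + N : ℕ) : ℝ)) ≤ Real.exp (-(n:ℝ)) := by
          apply Real.exp_le_exp.mpr
          push_cast
          linarith [Nat.cast_nonneg (α := ℝ) N]
        have h2 : Real.exp (-(n:ℝ)) = Real.exp (-1) ^ n := by
          rw [← Real.exp_nat_mul]
          norm_num
        linarith [h2 ▸ h1]
end
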